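/- arXiv:1308.2170 — 3 statements merged into one kernel-verified Lean document; each statement's English description precedes it below -/
import Mathlib

section
/- Let e ≥ 2, r ≥ 2, let Y ∈ Λ, let π be a permutation of {1,…,r}, and let M ∈ 𝔑(Y,π). Then M ∼ N₀(Y,π), where N₀(Y,π) = Δ^π(Y,((1),(1,r)),(1)). -/
open scoped Classical

namespace AK
noncomputable section



/-! ### Matrices, order from base tuple, abacus β-sets -/

/-- The order ≺ on columns determined by a base tuple `B`. -/
def prec {e : ℕ} (B : Fin e → ℕ) (i j : Fin e) : Prop :=
  B i < B j ∨ (B i = B j ∧ i < j)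

/-- `rank B i = π(B)⁻¹(i)`, the number of columns ≺-smaller than `i`. -/
def rank {e : ℕ} (B : Fin e → ℕ) (i : Fin e) : Fin e :=
  ⟨(Finset.univ.filter (fun j => prec B j i)).card, by
    have h1 : (Finset.univ.filter (fun j => prec B j i)) ⊆ Finset.univ.erase i := by
      intro j hj
      rw [Finset.mem_filter] at hj
      refine Finset.mem_erase.mpr ⟨?_, Finset.mem_univ j⟩
      rintro rfl
      rcases hj.2 with h | ⟨-, h⟩ <;> exact lt_irrefl _ h
    have h2 := Finset.card_le_card h1
    have h3 : (Finset.univ.erase i).card < Finset.univ.card :=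
      Finset.card_erase_lt_of_mem (Finset.mem_univ i)
    simpa using lt_of_le_of_lt h2 h3⟩

/-- The number of beads on runner `i` of the abacus of component `s` of `Pt(B,M)`. -/
def beads {e r : ℕ} (B : Fin e → ℕ) (M : Fin r → Fin e → Bool) (s : Fin r) (i : Fin e) : ℕ :=
  B i + (if M s (rank B i) then 1 else 0)

/-- The canonical β-set of component `s` of `Pt(B,M)`. -/
def Tset {e r : ℕ} (B : Fin e → ℕ) (M : Fin r → Fin e → Bool) (s : Fin r) : Set ℤ :=
  {z | z < 0 ∨ (0 ≤ z ∧ ∃ h : z.toNat % e < e, z.toNat / e < beads B M s ⟨z.toNat % e, h⟩)}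

/-- `n_s`, the total number of beads of component `s`. -/
def nsum {e r : ℕ} (B : Fin e → ℕ) (M : Fin r → Fin e → Bool) (s : Fin r) : ℕ :=
  ∑ i : Fin e, beads B M s i

/-- Decreasing enumeration of a set of integers: `tEnum T x` is `t_{x+1}`. -/
noncomputable def tEnum (T : Set ℤ) : ℕ → ℤ
  | 0 => sSup T
  | (x + 1) => sSup (T ∩ Set.Iio (tEnum T x))

/-- The multipartition `Pt(B,M)`: component `s`, part `p+1` (0-indexed parts). -/
noncomputable def PtPart {e r : ℕ} (B : Fin e → ℕ) (M : Fin r → Fin e → Bool)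
    (s : Fin r) (p : ℕ) : ℕ :=
  (tEnum (Tset B M s) p + (p + 1) - (nsum B M s : ℤ)).toNat

/-- The multicharge of `Pt(B,M)`. -/
noncomputable def PtCharge {e r : ℕ} (B : Fin e → ℕ) (M : Fin r → Fin e → Bool)
    (s : Fin r) : ZMod e :=
  (nsum B M s : ZMod e)

/-! ### Nodes, good nodes and Kleshchev multipartitions -/

/-- A node `(s, x, y)` (all 0-indexed). -/
abbrev Node (r : ℕ) := Fin r × ℕ × ℕ

/-- `A` is above `B`. -/
def NodeAbove {r : ℕ} (A B : Node r) : Prop :=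
  A.1 < B.1 ∨ (A.1 = B.1 ∧ A.2.1 < B.2.1)

/-- The residue of a node. -/
def res {e r : ℕ} (a : Fin r → ZMod e) (A : Node r) : ZMod e :=
  a A.1 - (A.2.1 : ZMod e) + (A.2.2 : ZMod e)

/-- `A` is a removable node of `lam`. -/
def Removable {r : ℕ} (lam : Fin r → ℕ → ℕ) (A : Node r) : Prop :=
  A.2.2 + 1 = lam A.1 A.2.1 ∧ lam A.1 (A.2.1 + 1) < lam A.1 A.2.1

/-- `A` is an addable node of `lam`. -/
def Addable {r : ℕ} (lam : Fin r → ℕ → ℕ) (A : Node r) : Prop :=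
  A.2.2 = lam A.1 A.2.1 ∧ (A.2.1 = 0 ∨ lam A.1 A.2.1 < lam A.1 (A.2.1 - 1))

/-- `A` is a normal node of `lam`. -/
def Normal {e r : ℕ} (a : Fin r → ZMod e) (lam : Fin r → ℕ → ℕ) (A : Node r) : Prop :=
  Removable lam A ∧
    ∀ B : Node r, Addable lam B → res a B = res a A → NodeAbove A B →
      Set.ncard {C : Node r | Addable lam C ∧ res a C = res a A ∧ NodeAbove A C ∧ NodeAbove C B}
        < Set.ncard {C : Node r | Removable lam C ∧ res a C = res a A ∧ NodeAbove A C ∧ NodeAbove C B}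

/-- `A` is a good node of `lam`: normal, and highest among normal nodes of its residue. -/
def Good {e r : ℕ} (a : Fin r → ZMod e) (lam : Fin r → ℕ → ℕ) (A : Node r) : Prop :=
  Normal a lam A ∧ ∀ B : Node r, Normal a lam B → res a B = res a A → B ≠ A → NodeAbove A B

/-- Remove the node `A` from `lam`. -/
def removeNode {r : ℕ} (lam : Fin r → ℕ → ℕ) (A : Node r) : Fin r → ℕ → ℕ :=
  fun s x => if s = A.1 ∧ x = A.2.1 then lam s x - 1 else lam s x

/-- Kleshchev multipartitions (for the multicharge `a`). -/
inductive IsKleshchev {e r : ℕ} (a : Fin r → ZMod e) : (Fin r → ℕ → ℕ) → Prop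
  | empty : IsKleshchev a (fun _ _ => 0)
  | step (lam : Fin r → ℕ → ℕ) (A : Node r) (hA : Good a lam A)
      (h : IsKleshchev a (removeNode lam A)) : IsKleshchev a lam

/-! ### Weights and bead swaps -/

/-- `δ₊^M(t,s)`. -/
def deltaP {e r : ℕ} (M : Fin r → Fin e → Bool) (t s : Fin r) : ℕ :=
  (Finset.univ.filter (fun i => M t i = true ∧ M s i = false)).card

/-- `wt^M(t,s)`. -/
def wtPair {e r : ℕ} (M : Fin r → Fin e → Bool) (t s : Fin r) : ℕ :=
  min (deltaP M t s) (deltaP M s t)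

/-- `wt(M)`. -/
def wtM {e r : ℕ} (M : Fin r → Fin e → Bool) : ℕ :=
  ∑ t : Fin r, ∑ s ∈ Finset.univ.filter (· < t), wtPair M t s

/-- `M'` is obtained from `M` by a bead swap. -/
def BeadSwap {e r : ℕ} (M M' : Fin r → Fin e → Bool) : Prop :=
  ∃ i j : Fin e, i ≠ j ∧ ∃ s t : Fin r, s ≠ t ∧
    M s i = true ∧ M t j = true ∧ M s j = false ∧ M t i = false ∧
    M' s i = false ∧ M' t j = false ∧ M' s j = true ∧ M' t i = true ∧
    (∀ s' i', (s' ≠ s ∧ s' ≠ t) ∨ (i' ≠ i ∧ i' ≠ j) → M' s' i' = M s' i')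


/-! ### Weight graphs and the sets `T^y(i,j)` -/

/-- The weight graph of `M`. -/
def wGraph {e r : ℕ} (M : Fin r → Fin e → Bool) : SimpleGraph (Fin r) :=
  SimpleGraph.fromRel (fun s t => wtPair M s t = 1)

/-- The weight graph of `M` is a tree. -/
def GTree {e r : ℕ} (M : Fin r → Fin e → Bool) : Prop :=
  (∀ s t : Fin r, s ≠ t → wtPair M s t ≤ 1) ∧ (wGraph M).IsTree

/-- The column vector `I(a)` (1-based rows `1,…,a` are ones). -/
def Ivec (r a : ℕ) : Fin r → Bool := fun s => decide (s.1 + 1 ≤ a)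

/-- The condition `(i,j) ∈ P_t(y)`. -/
def PtPairCond (r t : ℕ) (y : ℕ → ℕ) (iseq : Fin t → ℕ) (jseq : Fin (t + 1) → ℕ) : Prop :=
  jseq 0 = 1 ∧ jseq (Fin.last t) = r ∧
  (∀ m : Fin t, jseq m.castSucc ≤ iseq m) ∧
  (∀ m : Fin t, iseq m < jseq m.succ) ∧
  (∀ m : Fin t, 1 ≤ y (iseq m))

/-- The column vector `c_m(i,j)`: `I(i_m)` with the entries in (1-based) rows
`j_m` and `j_{m+1}` interchanged. -/
def cvec (r : ℕ) {t : ℕ} (iseq : Fin t → ℕ) (jseq : Fin (t + 1) → ℕ) (m : Fin t) :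
    Fin r → Bool :=
  fun s =>
    if s.1 + 1 = jseq m.castSucc then decide (jseq m.succ ≤ iseq m)
    else if s.1 + 1 = jseq m.succ then decide (jseq m.castSucc ≤ iseq m)
    else decide (s.1 + 1 ≤ iseq m)

/-- The multiset of columns of a matrix. -/
def colMultiset {e r : ℕ} (M : Fin r → Fin e → Bool) : Multiset (Fin r → Bool) :=
  (Finset.univ.val : Multiset (Fin e)).map fun c => fun s => M s c

/-- `M ∈ T^y(i,j)`. -/
def memT (r e : ℕ) (y : ℕ → ℕ) {t : ℕ} (iseq : Fin t → ℕ) (jseq : Fin (t + 1) → ℕ)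
    (M : Fin r → Fin e → Bool) : Prop :=
  ∃ w0 wr : ℕ,
    colMultiset M =
      (∑ a ∈ Finset.Icc 1 (r - 1),
        Multiset.replicate (if ∃ m, iseq m = a then y a - 1 else y a) (Ivec r a))
      + ((Finset.univ.val : Multiset (Fin t)).map (cvec r iseq jseq))
      + Multiset.replicate w0 (Ivec r 0) + Multiset.replicate wr (Ivec r r)

/-! ### The sets `𝔑(Y,π)` -/

/-- `Y_a` for a natural-number index `a`. -/
def Yat {e : ℕ} (r : ℕ) (Y : Fin r → Finset (Fin e)) (a : ℕ) : Finset (Fin e) :=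
  if h : a < r then Y ⟨a, h⟩ else ∅

/-- `Y ∈ Λ`. -/
def LambdaMem {e : ℕ} (r : ℕ) (Y : Fin r → Finset (Fin e)) : Prop :=
  (∀ a b : Fin r, a ≠ b → Disjoint (Y a) (Y b)) ∧
  (∀ c : Fin e, ∃ a, c ∈ Y a) ∧
  (Yat r Y 1).Nonempty ∧ (Yat r Y (r - 1)).Nonempty

/-- The matrix `Δ(Y,(i,j),w)`. -/
def DeltaM {e : ℕ} (r : ℕ) {t : ℕ} (Y : Fin r → Finset (Fin e))
    (iseq : Fin t → ℕ) (jseq : Fin (t + 1) → ℕ) (w : Fin t → ℕ) :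
    Fin r → Fin e → Bool :=
  fun s c =>
    if h : ∃ u : Fin t, ((Yat r Y (iseq u)).sort (· ≤ ·))[w u - 1]? = some c then
      cvec r iseq jseq (Classical.choose h) s
    else if h2 : ∃ a : Fin r, c ∈ Y a then Ivec r ((Classical.choose h2).1) s
    else false

/-- The set `𝔑(Y,π)`. -/
def Nset {e : ℕ} (r : ℕ) (Y : Fin r → Finset (Fin e)) (π : Equiv.Perm (Fin r)) :
    Set (Fin r → Fin e → Bool) :=
  {M | ∃ t, 1 ≤ t ∧ t ≤ r - 1 ∧
    ∃ (iseq : Fin t → ℕ) (jseq : Fin (t + 1) → ℕ) (w : Fin t → ℕ),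
      PtPairCond r t (fun a => (Yat r Y a).card) iseq jseq ∧
      (∀ u, 1 ≤ w u ∧ w u ≤ (Yat r Y (iseq u)).card) ∧
      M = fun s c => DeltaM r Y iseq jseq w (π s) c}

/-- The matrix `N(Y,π) = Δ^π(Y,((1),(1,r)),(1))`. -/
def Nzero {e : ℕ} (r : ℕ) (Y : Fin r → Finset (Fin e)) (π : Equiv.Perm (Fin r)) :
    Fin r → Fin e → Bool :=
  fun s c => DeltaM r Y (fun _ : Fin 1 => 1) ![1, r] (fun _ : Fin 1 => 1) (π s) c


/-! ### Auxiliary: row and column sums -/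

def rsum {e r : ℕ} (M : Fin r → Fin e → Bool) (s : Fin r) : ℕ :=
  ∑ c, if M s c then 1 else 0

def csum {e r : ℕ} (M : Fin r → Fin e → Bool) (c : Fin e) : ℕ :=
  ∑ s, if M s c then 1 else 0


lemma sum_swap_eq {α : Type*} [Fintype α] (i j : α) (f g : α → ℕ)
    (hfi : f i = g j) (hfj : f j = g i) (h : ∀ x, x ≠ i → x ≠ j → f x = g x) :
    ∑ x, f x = ∑ x, g x := by
  have key : ∀ x, f x = g (Equiv.swap i j x) := by
    intro x
    by_cases hx : x = i
    · subst hx; rw [Equiv.swap_apply_left]; exact hfi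
    · by_cases hx' : x = j
      · subst hx'; rw [Equiv.swap_apply_right]; exact hfj
      · rw [Equiv.swap_apply_of_ne_of_ne hx hx']; exact h x hx hx'
  calc ∑ x, f x = ∑ x, g (Equiv.swap i j x) := by simp only [key]
    _ = ∑ x, g x := Equiv.sum_comp (Equiv.swap i j) g


lemma beadSwap_rsum {e r : ℕ} {M M' : Fin r → Fin e → Bool} (h : BeadSwap M M') :
    ∀ s', rsum M' s' = rsum M s' := by
  obtain ⟨i, j, hij, s, t, hst, h1, h2, h3, h4, h5, h6, h7, h8, hrest⟩ := h
  intro s'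
  by_cases hs : s' = s
  · subst hs
    refine sum_swap_eq i j _ _ ?_ ?_ ?_
    · simp [h5, h3]
    · simp [h7, h1]
    · intro x hx hx'; rw [hrest _ x (Or.inr ⟨hx, hx'⟩)]
  · by_cases ht : s' = t
    · subst ht
      refine sum_swap_eq i j _ _ ?_ ?_ ?_
      · simp [h8, h2]
      · simp [h6, h4]
      · intro x hx hx'; rw [hrest _ x (Or.inr ⟨hx, hx'⟩)]
    · unfold rsum
      refine Finset.sum_congr rfl fun c _ => ?_
      rw [hrest s' c (Or.inl ⟨hs, ht⟩)]


lemma beadSwap_csum {e r : ℕ} {M M' : Fin r → Fin e → Bool} (h : BeadSwap M M') :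
    ∀ c, csum M' c = csum M c := by
  obtain ⟨i, j, hij, s, t, hst, h1, h2, h3, h4, h5, h6, h7, h8, hrest⟩ := h
  intro c
  by_cases hc : c = i
  · subst hc
    refine sum_swap_eq s t _ _ ?_ ?_ ?_
    · simp [h5, h4]
    · simp [h8, h1]
    · intro x hx hx'; rw [hrest x _ (Or.inl ⟨hx, hx'⟩)]
  · by_cases hc' : c = j
    · subst hc'
      refine sum_swap_eq s t _ _ ?_ ?_ ?_
      · simp [h7, h2]
      · simp [h6, h3]
      · intro x hx hx'; rw [hrest x _ (Or.inl ⟨hx, hx'⟩)]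
    · unfold csum
      refine Finset.sum_congr rfl fun x _ => ?_
      rw [hrest x c (Or.inr ⟨hc, hc'⟩)]



lemma eqvGen_map {α β : Type*} {R : α → α → Prop} {R' : β → β → Prop} (f : α → β)
    (hf : ∀ x y, R x y → R' (f x) (f y)) {a b : α} (h : Relation.EqvGen R a b) :
    Relation.EqvGen R' (f a) (f b) := by
  induction h with
  | rel x y hxy => exact Relation.EqvGen.rel _ _ (hf x y hxy)
  | refl x => exact Relation.EqvGen.refl _
  | symm x y _ ih => exact Relation.EqvGen.symm _ _ ih
  | trans x y z _ _ ih1 ih2 => exact Relation.EqvGen.trans _ _ _ ih1 ih2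


lemma beadSwap_cons {e r : ℕ} (z : Fin e → Bool) (A B : Fin r → Fin e → Bool)
    (h : BeadSwap A B) : BeadSwap (Fin.cons z A) (Fin.cons z B) := by
  obtain ⟨i, j, hij, s, t, hst, h1, h2, h3, h4, h5, h6, h7, h8, hrest⟩ := h
  refine ⟨i, j, hij, s.succ, t.succ, fun hc => hst (Fin.succ_injective r hc),
    by simpa using h1, by simpa using h2, by simpa using h3, by simpa using h4,
    by simpa using h5, by simpa using h6, by simpa using h7, by simpa using h8, ?_⟩
  intro s' i' hcond
  rcases Fin.eq_zero_or_eq_succ s' with rfl | ⟨k, rfl⟩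
  · simp
  · simp only [Fin.cons_succ]
    refine hrest k i' ?_
    rcases hcond with ⟨hk1, hk2⟩ | hc
    · exact Or.inl ⟨fun hc => hk1 (by rw [hc]), fun hc => hk2 (by rw [hc])⟩
    · exact Or.inr hc


lemma rsum_eq_card {e r : ℕ} (M : Fin r → Fin e → Bool) (s : Fin r) :
    rsum M s = (Finset.univ.filter (fun c => M s c = true)).card := by
  simp [rsum, Finset.sum_boole]


lemma csum_eq_card {e r : ℕ} (M : Fin r → Fin e → Bool) (c : Fin e) :
    csum M c = (Finset.univ.filter (fun s => M s c = true)).card := by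
  simp [csum, Finset.sum_boole]


lemma exists_diff_pair {e r : ℕ} (M N : Fin r → Fin e → Bool) (s : Fin r)
    (hr : rsum M s = rsum N s) (hne : ¬ ∀ c, M s c = N s c) :
    ∃ i j, M s i = true ∧ N s i = false ∧ M s j = false ∧ N s j = true := by
  classical
  set A := Finset.univ.filter (fun c => M s c = true) with hA
  set B := Finset.univ.filter (fun c => N s c = true) with hB
  have hcard : A.card = B.card := by rw [← rsum_eq_card, ← rsum_eq_card]; exact hr
  have hAB : A ≠ B := by
    intro h
    apply hne
    intro c
    have : c ∈ A ↔ c ∈ B := by rw [h]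
    simp only [hA, hB, Finset.mem_filter, Finset.mem_univ, true_and] at this
    cases hMc : M s c <;> cases hNc : N s c <;> simp [hMc, hNc] at this ⊢
  have h1 : (A \ B).Nonempty := by
    rw [Finset.sdiff_nonempty]
    intro hsub
    exact hAB (Finset.eq_of_subset_of_card_le hsub (le_of_eq hcard.symm))
  have h2 : (B \ A).Nonempty := by
    rw [Finset.sdiff_nonempty]
    intro hsub
    exact hAB (Finset.eq_of_subset_of_card_le hsub (le_of_eq hcard)).symm
  obtain ⟨i, hi⟩ := h1
  obtain ⟨j, hj⟩ := h2
  rw [Finset.mem_sdiff] at hi hj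
  simp only [hA, hB, Finset.mem_filter, Finset.mem_univ, true_and] at hi hj
  exact ⟨i, j, hi.1, Bool.not_eq_true _ ▸ (by simpa using hi.2),
    by simpa using hj.2, hj.1⟩


lemma dichotomy {e r : ℕ} (M N : Fin r → Fin e → Bool)
    (hc : ∀ c, csum M c = csum N c) (s0 : Fin r) {i j : Fin e}
    (h1 : M s0 i = true) (h2 : N s0 i = false) (h3 : M s0 j = false) (h4 : N s0 j = true) :
    (∃ t, M t j = true ∧ M t i = false) ∨ (∃ t, N t i = true ∧ N t j = false) := by
  by_contra hcon
  push_neg at hcon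
  obtain ⟨hM, hN⟩ := hcon
  have hMlt : csum M j < csum M i := by
    rw [csum_eq_card, csum_eq_card]
    apply Finset.card_lt_card
    constructor
    · intro t ht
      simp only [Finset.mem_filter, Finset.mem_univ, true_and] at ht ⊢
      have := hM t ht
      cases h : M t i
      · exact absurd h this
      · rfl
    · intro hsub
      have := hsub (by simp [h1] : s0 ∈ Finset.univ.filter (fun t => M t i = true))
      simp [h3] at this
  have hNlt : csum N i < csum N j := by
    rw [csum_eq_card, csum_eq_card]
    apply Finset.card_lt_card
    constructor
    · intro t ht
      simp only [Finset.mem_filter, Finset.mem_univ, true_and] at ht ⊢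
      have := hN t ht
      cases h : N t j
      · exact absurd h this
      · rfl
    · intro hsub
      have := hsub (by simp [h4] : s0 ∈ Finset.univ.filter (fun t => N t j = true))
      simp [h2] at this
  rw [hc i, hc j] at hMlt
  omega


lemma ryser : ∀ (r : ℕ) {e : ℕ} (M N : Fin r → Fin e → Bool),
    (∀ s, rsum M s = rsum N s) → (∀ c, csum M c = csum N c) →
    Relation.EqvGen BeadSwap M N := by
  intro r
  induction r with
  | zero =>
    intro e M N _ _
    have : M = N := funext fun s => s.elim0
    rw [this]
    exact Relation.EqvGen.refl _
  | succ r IH =>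
    intro e M N hr hc
    suffices H : ∀ d (M N : Fin (r+1) → Fin e → Bool),
        (∀ s, rsum M s = rsum N s) → (∀ c, csum M c = csum N c) →
        (Finset.univ.filter (fun c => M 0 c ≠ N 0 c)).card ≤ d →
        Relation.EqvGen BeadSwap M N by
      exact H _ M N hr hc le_rfl
    intro d
    induction d with
    | zero =>
      intro M N hr hc hcard
      have hrow0 : ∀ c, M 0 c = N 0 c := by
        intro c
        by_contra hcc
        have : c ∈ Finset.univ.filter (fun c => M 0 c ≠ N 0 c) := by simp [hcc]
        have := Finset.card_pos.mpr ⟨c, this⟩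
        omega
      -- lift from the tail
      have htail : Relation.EqvGen BeadSwap (Fin.tail M) (Fin.tail N) := by
        apply IH
        · intro s; exact hr s.succ
        · intro c
          have h1 := hc c
          rw [csum, csum, Fin.sum_univ_succ, Fin.sum_univ_succ, hrow0 c] at h1
          exact Nat.add_left_cancel h1
      have := eqvGen_map (fun A : Fin r → Fin e → Bool => (Fin.cons (M 0) A : Fin (r+1) → Fin e → Bool)) (fun A B h => beadSwap_cons (M 0) A B h) htail
      have hN0 : M 0 = N 0 := funext hrow0
      simp only [Fin.cons_self_tail] at this
      rw [hN0] at this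
      simp only [Fin.cons_self_tail] at this
      exact this
    | succ d IHd =>
      intro M N hr hc hcard
      by_cases hrow0 : ∀ c, M 0 c = N 0 c
      · apply IHd M N hr hc
        have : Finset.univ.filter (fun c => M 0 c ≠ N 0 c) = ∅ := by
          apply Finset.filter_eq_empty_iff.mpr
          intro c _; simpa using hrow0 c
        rw [this]; simp
      · obtain ⟨i, j, h1, h2, h3, h4⟩ := exists_diff_pair M N 0 (hr 0) hrow0
        have hij : i ≠ j := by intro h; rw [h, h3] at h1; exact absurd h1 (by simp)
        have hji : j ≠ i := Ne.symm hij
        have hiold : i ∈ Finset.univ.filter (fun c => M 0 c ≠ N 0 c) := by simp [h1, h2]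
        have hjold : j ∈ Finset.univ.filter (fun c => M 0 c ≠ N 0 c) := by simp [h3, h4]
        rcases dichotomy M N hc 0 h1 h2 h3 h4 with ⟨t, ht1, ht2⟩ | ⟨t, ht1, ht2⟩
        · -- swap on M
          have ht0 : t ≠ 0 := by intro h; rw [h, h3] at ht1; exact absurd ht1 (by simp)
          set M' : Fin (r+1) → Fin e → Bool := fun s' c' =>
            if s' = 0 then (if c' = i then false else if c' = j then true else M 0 c')
            else if s' = t then (if c' = i then true else if c' = j then false else M t c')
            else M s' c' with hM'
          have hswap : BeadSwap M M' := by
            refine ⟨i, j, hij, 0, t, fun h => ht0 h.symm, h1, ht1, h3, ht2, ?_, ?_, ?_, ?_, ?_⟩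
            · simp [hM']
            · simp [hM', ht0, hji]
            · simp [hM', hji]
            · simp [hM', ht0]
            · intro s' i' hcond
              simp only [hM']
              rcases hcond with ⟨hs1, hs2⟩ | ⟨hi1, hi2⟩
              · rw [if_neg hs1, if_neg hs2]
              · by_cases hs0 : s' = 0
                · subst hs0; rw [if_pos rfl, if_neg hi1, if_neg hi2]
                · rw [if_neg hs0]
                  by_cases hst : s' = t
                  · subst hst; rw [if_pos rfl, if_neg hi1, if_neg hi2]
                  · rw [if_neg hst]
          have hM'0i : M' 0 i = false := by simp [hM']
          have hM'0j : M' 0 j = true := by simp [hM', hji]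
          have hM'other : ∀ c, c ≠ i → c ≠ j → M' 0 c = M 0 c := by
            intro c hc1 hc2; simp [hM', hc1, hc2]
          have hsub : Finset.univ.filter (fun c => M' 0 c ≠ N 0 c)
              ⊆ ((Finset.univ.filter (fun c => M 0 c ≠ N 0 c)).erase i).erase j := by
            intro c hcm
            simp only [Finset.mem_filter, Finset.mem_univ, true_and] at hcm
            have hci : c ≠ i := by rintro rfl; rw [hM'0i, h2] at hcm; exact hcm rfl
            have hcj : c ≠ j := by rintro rfl; rw [hM'0j, h4] at hcm; exact hcm rfl
            rw [Finset.mem_erase, Finset.mem_erase]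
            refine ⟨hcj, hci, ?_⟩
            simp only [Finset.mem_filter, Finset.mem_univ, true_and]
            rwa [hM'other c hci hcj] at hcm
          have hcardnew : (Finset.univ.filter (fun c => M' 0 c ≠ N 0 c)).card ≤ d := by
            have h5 := Finset.card_le_card hsub
            have h6 : j ∈ (Finset.univ.filter (fun c => M 0 c ≠ N 0 c)).erase i :=
              Finset.mem_erase.mpr ⟨fun h => hij h.symm, hjold⟩
            rw [Finset.card_erase_of_mem h6, Finset.card_erase_of_mem hiold] at h5
            omega
          refine Relation.EqvGen.trans _ M' _ (Relation.EqvGen.rel _ _ hswap) ?_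
          exact IHd M' N (fun s => (beadSwap_rsum hswap s).trans (hr s))
            (fun c => (beadSwap_csum hswap c).trans (hc c)) hcardnew
        · -- swap on N
          have ht0 : t ≠ 0 := by intro h; rw [h, h2] at ht1; exact absurd ht1 (by simp)
          set N' : Fin (r+1) → Fin e → Bool := fun s' c' =>
            if s' = 0 then (if c' = i then true else if c' = j then false else N 0 c')
            else if s' = t then (if c' = i then false else if c' = j then true else N t c')
            else N s' c' with hN'
          have hswap : BeadSwap N N' := by
            refine ⟨j, i, fun h => hij h.symm, 0, t, fun h => ht0 h.symm,
              h4, ht1, h2, ht2, ?_, ?_, ?_, ?_, ?_⟩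
            · simp [hN', hji]
            · simp [hN', ht0, hji]
            · simp [hN']
            · simp [hN', ht0, hji]
            · intro s' i' hcond
              simp only [hN']
              rcases hcond with ⟨hs1, hs2⟩ | ⟨hi1, hi2⟩
              · rw [if_neg hs1, if_neg hs2]
              · by_cases hs0 : s' = 0
                · subst hs0; rw [if_pos rfl, if_neg hi2, if_neg hi1]
                · rw [if_neg hs0]
                  by_cases hst : s' = t
                  · subst hst; rw [if_pos rfl, if_neg hi2, if_neg hi1]
                  · rw [if_neg hst]
          have hN'0i : N' 0 i = true := by simp [hN']
          have hN'0j : N' 0 j = false := by simp [hN', hji]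
          have hN'other : ∀ c, c ≠ i → c ≠ j → N' 0 c = N 0 c := by
            intro c hc1 hc2; simp [hN', hc1, hc2]
          have hsub : Finset.univ.filter (fun c => M 0 c ≠ N' 0 c)
              ⊆ ((Finset.univ.filter (fun c => M 0 c ≠ N 0 c)).erase i).erase j := by
            intro c hcm
            simp only [Finset.mem_filter, Finset.mem_univ, true_and] at hcm
            have hci : c ≠ i := by rintro rfl; rw [hN'0i, h1] at hcm; exact hcm rfl
            have hcj : c ≠ j := by rintro rfl; rw [hN'0j, h3] at hcm; exact hcm rfl
            rw [Finset.mem_erase, Finset.mem_erase]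
            refine ⟨hcj, hci, ?_⟩
            simp only [Finset.mem_filter, Finset.mem_univ, true_and]
            rwa [hN'other c hci hcj] at hcm
          have hcardnew : (Finset.univ.filter (fun c => M 0 c ≠ N' 0 c)).card ≤ d := by
            have h5 := Finset.card_le_card hsub
            have h6 : j ∈ (Finset.univ.filter (fun c => M 0 c ≠ N 0 c)).erase i :=
              Finset.mem_erase.mpr ⟨fun h => hij h.symm, hjold⟩
            rw [Finset.card_erase_of_mem h6, Finset.card_erase_of_mem hiold] at h5
            omega
          refine Relation.EqvGen.trans _ N' _ ?_
            (Relation.EqvGen.symm _ _ (Relation.EqvGen.rel _ _ hswap))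
          exact IHd M N' (fun s => (hr s).trans (beadSwap_rsum hswap s).symm)
            (fun c => (hc c).trans (beadSwap_csum hswap c).symm) hcardnew



lemma mem_Yat {e r : ℕ} {Y : Fin r → Finset (Fin e)} {a : ℕ} {c : Fin e}
    (h : c ∈ Yat r Y a) : ∃ ha : a < r, c ∈ Y ⟨a, ha⟩ := by
  unfold Yat at h
  split_ifs at h with ha
  · exact ⟨ha, h⟩
  · simp at h


lemma uniqY {e r : ℕ} {Y : Fin r → Finset (Fin e)} (hY : LambdaMem r Y)
    {c : Fin e} {a a' : Fin r} (h : c ∈ Y a) (h' : c ∈ Y a') : a = a' := by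
  by_contra hne
  exact Finset.disjoint_left.mp (hY.1 a a' hne) h h'


lemma Ivec_sum (r a : ℕ) : (∑ s : Fin r, if Ivec r a s then 1 else 0) = min a r := by
  induction r with
  | zero => simp
  | succ n ih =>
    rw [Fin.sum_univ_castSucc]
    have : ∀ s : Fin n, (if Ivec (n+1) a s.castSucc then 1 else 0)
        = if Ivec n a s then 1 else 0 := by intro s; simp [Ivec]
    simp only [this]
    rw [ih]
    simp only [Ivec]
    by_cases h : n + 1 ≤ a
    · simp [h] <;> omega
    · simp [h] <;> omega


lemma cvec_sum {r t : ℕ} (iseq : Fin t → ℕ) (jseq : Fin (t+1) → ℕ) (m : Fin t)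
    (h1 : 1 ≤ jseq m.castSucc) (h2 : jseq m.castSucc ≤ iseq m)
    (h3 : iseq m < jseq m.succ) (h4 : jseq m.succ ≤ r) :
    (∑ s : Fin r, if cvec r iseq jseq m s then 1 else 0) = iseq m := by
  set jc := jseq m.castSucc
  set js := jseq m.succ
  have hjc : jc - 1 < r := by omega
  have hjs : js - 1 < r := by omega
  have := sum_swap_eq (⟨jc - 1, hjc⟩ : Fin r) (⟨js - 1, hjs⟩ : Fin r)
    (fun s => if cvec r iseq jseq m s then 1 else 0)
    (fun s => if Ivec r (iseq m) s then 1 else 0) ?_ ?_ ?_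
  · rw [this, Ivec_sum]; omega
  · simp only [cvec, Ivec]
    rw [if_pos (by omega : (jc - 1) + 1 = jc)]
    have : ¬ js ≤ iseq m := by omega
    have h5 : ¬ ((js : ℕ) - 1 + 1 ≤ iseq m) := by omega
    simp [this, h5]
    exact h3
  · simp only [cvec, Ivec]
    rw [if_neg (by omega : ¬ (js - 1) + 1 = jc), if_pos (by omega : (js - 1) + 1 = js)]
    have h5 : (jc : ℕ) - 1 + 1 ≤ iseq m := by omega
    simp [h2, h5]
    exact h2
  · intro x hx1 hx2
    have hx1' : x.1 + 1 ≠ jc := by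
      intro h; apply hx1; apply Fin.ext; simp; omega
    have hx2' : x.1 + 1 ≠ js := by
      intro h; apply hx2; apply Fin.ext; simp; omega
    simp only [cvec, Ivec, if_neg hx1', if_neg hx2']
    simp [show ¬ (x.1 + 1 = jseq m.castSucc) from hx1', show ¬ (x.1 + 1 = jseq m.succ) from hx2']


section PtPair
variable {r t : ℕ} {y : ℕ → ℕ} {iseq : Fin t → ℕ} {jseq : Fin (t+1) → ℕ}

lemma jseq_strictMono (hP : PtPairCond r t y iseq jseq) : StrictMono jseq := by
  rw [Fin.strictMono_iff_lt_succ]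
  intro m
  exact lt_of_le_of_lt (hP.2.2.1 m) (hP.2.2.2.1 m)

lemma jseq_ge_one (hP : PtPairCond r t y iseq jseq) (v : Fin (t+1)) : 1 ≤ jseq v := by
  have := (jseq_strictMono hP).monotone (Fin.zero_le v)
  rw [hP.1] at this
  exact this

lemma jseq_le_r (hP : PtPairCond r t y iseq jseq) (v : Fin (t+1)) : jseq v ≤ r := by
  have := (jseq_strictMono hP).monotone (Fin.le_last v)
  rw [hP.2.1] at this
  exact this

lemma iseq_strictMono (hP : PtPairCond r t y iseq jseq) : StrictMono iseq := by
  intro u v huv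
  have h1 : iseq u < jseq u.succ := hP.2.2.2.1 u
  have h2 : jseq v.castSucc ≤ iseq v := hP.2.2.1 v
  have h3 : jseq u.succ ≤ jseq v.castSucc := by
    apply (jseq_strictMono hP).monotone
    rw [Fin.le_def]
    simp [Fin.val_fin_lt] at huv ⊢
    omega
  omega

lemma iseq_lt_r (hP : PtPairCond r t y iseq jseq) (u : Fin t) : iseq u < r :=
  lt_of_lt_of_le (hP.2.2.2.1 u) (jseq_le_r hP u.succ)

end PtPair


section Sums
variable {e r t : ℕ} {Y : Fin r → Finset (Fin e)}
  {iseq : Fin t → ℕ} {jseq : Fin (t+1) → ℕ} {w : Fin t → ℕ}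

/-- the selected column of index `u` -/
lemma exists_sel (hw : ∀ u, 1 ≤ w u ∧ w u ≤ (Yat r Y (iseq u)).card) (u : Fin t) :
    ∃ c : Fin e, ((Yat r Y (iseq u)).sort (· ≤ ·))[w u - 1]? = some c := by
  have hlen : ((Yat r Y (iseq u)).sort (· ≤ ·)).length = (Yat r Y (iseq u)).card :=
    Finset.length_sort _
  have hlt : w u - 1 < ((Yat r Y (iseq u)).sort (· ≤ ·)).length := by
    rw [hlen]; have := hw u; omega
  exact ⟨_, List.getElem?_eq_getElem hlt⟩

lemma sel_mem_Yat {u : Fin t} {c : Fin e}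
    (h : ((Yat r Y (iseq u)).sort (· ≤ ·))[w u - 1]? = some c) :
    c ∈ Yat r Y (iseq u) := by
  have := List.mem_of_getElem? h
  rwa [Finset.mem_sort] at this

lemma csum_DeltaM (hY : LambdaMem r Y)
    (hP : PtPairCond r t (fun a => (Yat r Y a).card) iseq jseq)
    (hw : ∀ u, 1 ≤ w u ∧ w u ≤ (Yat r Y (iseq u)).card) (c : Fin e) :
    csum (DeltaM r Y iseq jseq w) c = (Classical.choose (hY.2.1 c) : Fin r).1 := by
  by_cases hsel : ∃ u : Fin t, ((Yat r Y (iseq u)).sort (· ≤ ·))[w u - 1]? = some c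
  · have hspec := Classical.choose_spec hsel
    set u₀ := Classical.choose hsel with hu₀
    have hmem := sel_mem_Yat hspec
    obtain ⟨hlt, hmem'⟩ := mem_Yat hmem
    have ha : Classical.choose (hY.2.1 c) = ⟨iseq u₀, hlt⟩ :=
      uniqY hY (Classical.choose_spec (hY.2.1 c)) hmem'
    have : csum (DeltaM r Y iseq jseq w) c
        = ∑ s : Fin r, if cvec r iseq jseq u₀ s then 1 else 0 := by
      unfold csum DeltaM
      refine Finset.sum_congr rfl fun s _ => ?_
      rw [dif_pos hsel]
    rw [this, cvec_sum iseq jseq u₀ (jseq_ge_one hP _) (hP.2.2.1 u₀) (hP.2.2.2.1 u₀)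
      (jseq_le_r hP _), ha]
  · have : csum (DeltaM r Y iseq jseq w) c
        = ∑ s : Fin r, if Ivec r (Classical.choose (hY.2.1 c)).1 s then 1 else 0 := by
      unfold csum DeltaM
      refine Finset.sum_congr rfl fun s _ => ?_
      rw [dif_neg hsel, dif_pos (hY.2.1 c)]
    rw [this, Ivec_sum]
    have := (Classical.choose (hY.2.1 c)).2
    omega

end Sums


lemma cvec_sub {r t : ℕ} (iseq : Fin t → ℕ) (jseq : Fin (t+1) → ℕ) (u : Fin t) (b : Fin r)
    (h2 : jseq u.castSucc ≤ iseq u) (h3 : iseq u < jseq u.succ) :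
    ((if cvec r iseq jseq u b then (1:ℤ) else 0) - (if Ivec r (iseq u) b then 1 else 0))
    = (if b.1+1 = jseq u.succ then (1:ℤ) else 0)
      - (if b.1+1 = jseq u.castSucc then 1 else 0) := by
  by_cases hb1 : b.1+1 = jseq u.castSucc
  · have hb2 : ¬ b.1+1 = jseq u.succ := by omega
    have hx : ¬ jseq u.succ ≤ iseq u := by omega
    have hz : b.1+1 ≤ iseq u := by omega
    have hne : ¬ jseq u.castSucc = jseq u.succ := by omega
    simp [cvec, Ivec, hb1, hb2, hx, hz, h2, hne]
  · by_cases hb2 : b.1+1 = jseq u.succ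
    · have hz : ¬ (b.1+1 ≤ iseq u) := by omega
      have hx : ¬ jseq u.succ ≤ iseq u := by omega
      have hne : ¬ jseq u.succ = jseq u.castSucc := by omega
      simp [cvec, Ivec, hb1, hb2, h2, hz, hx, hne]
    · simp [cvec, Ivec, hb1, hb2]


lemma telescope {t : ℕ} (jseq : Fin (t+1) → ℕ) (n : ℕ) :
    (∑ u : Fin t, ((if n = jseq u.succ then (1:ℤ) else 0)
      - (if n = jseq u.castSucc then 1 else 0)))
    = (if n = jseq (Fin.last t) then 1 else 0) - (if n = jseq 0 then 1 else 0) := by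
  set F : ℕ → ℤ := fun x => if h : x < t+1 then (if n = jseq ⟨x, h⟩ then 1 else 0) else 0
    with hF
  have hstep : ∀ u : Fin t, (if n = jseq u.succ then (1:ℤ) else 0)
      - (if n = jseq u.castSucc then 1 else 0) = F (u.1+1) - F u.1 := by
    intro u
    have h1 : u.1+1 < t+1 := by omega
    have h2 : u.1 < t+1 := by omega
    have e1 : (⟨u.1+1, h1⟩ : Fin (t+1)) = u.succ := by ext; simp
    have e2 : (⟨u.1, h2⟩ : Fin (t+1)) = u.castSucc := by ext; simp
    rw [hF]
    simp only [dif_pos h1, dif_pos h2, e1, e2]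
  calc (∑ u : Fin t, ((if n = jseq u.succ then (1:ℤ) else 0)
          - (if n = jseq u.castSucc then 1 else 0)))
      = ∑ u : Fin t, (F (u.1+1) - F u.1) := Finset.sum_congr rfl fun u _ => hstep u
    _ = ∑ x ∈ Finset.range t, (F (x+1) - F x) :=
        Fin.sum_univ_eq_sum_range (fun x => F (x+1) - F x) t
    _ = F t - F 0 := Finset.sum_range_sub F t
    _ = (if n = jseq (Fin.last t) then 1 else 0) - (if n = jseq 0 then 1 else 0) := by
        have h1 : t < t+1 := by omega
        have h2 : 0 < t+1 := by omega
        simp only [hF, dif_pos h1, dif_pos h2]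
        have e1 : (⟨t, h1⟩ : Fin (t+1)) = Fin.last t := rfl
        have e2 : (⟨0, h2⟩ : Fin (t+1)) = 0 := rfl
        rw [e1, e2]


section Sums2
variable {e r t : ℕ} {Y : Fin r → Finset (Fin e)}
  {iseq : Fin t → ℕ} {jseq : Fin (t+1) → ℕ} {w : Fin t → ℕ}

lemma rsum_DeltaM (hY : LambdaMem r Y)
    (hP : PtPairCond r t (fun a => (Yat r Y a).card) iseq jseq)
    (hw : ∀ u, 1 ≤ w u ∧ w u ≤ (Yat r Y (iseq u)).card) (b : Fin r) :
    (rsum (DeltaM r Y iseq jseq w) b : ℤ)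
      = (∑ c : Fin e, if Ivec r (Classical.choose (hY.2.1 c)).1 b then (1:ℤ) else 0)
        + ((if b.1+1 = r then (1:ℤ) else 0) - (if b.1+1 = 1 then 1 else 0)) := by
  classical
  set g : Fin t → Fin e := fun u => Classical.choose (exists_sel hw u) with hgdef
  have hg : ∀ u, ((Yat r Y (iseq u)).sort (· ≤ ·))[w u - 1]? = some (g u) :=
    fun u => Classical.choose_spec (exists_sel hw u)
  have hmemg : ∀ u, ∃ h : iseq u < r, g u ∈ Y ⟨iseq u, h⟩ :=
    fun u => mem_Yat (sel_mem_Yat (hg u))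
  have hginj : Function.Injective g := by
    intro u v huv
    obtain ⟨hu, hmu⟩ := hmemg u
    obtain ⟨hv, hmv⟩ := hmemg v
    rw [huv] at hmu
    have := uniqY hY hmu hmv
    have hiseq : iseq u = iseq v := by
      have := Fin.mk.inj_iff.mp this; exact this
    exact (iseq_strictMono hP).injective hiseq
  have himg : ∀ c : Fin e, c ∉ Finset.image g Finset.univ →
      DeltaM r Y iseq jseq w b c = Ivec r ((Classical.choose (hY.2.1 c)) : Fin r).1 b := by
    intro c hc
    unfold DeltaM
    rw [dif_neg, dif_pos (hY.2.1 c)]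
    rintro ⟨u, hu⟩
    apply hc
    rw [hg u] at hu
    have : g u = c := by injection hu
    exact Finset.mem_image.mpr ⟨u, Finset.mem_univ u, this⟩
  have hselg : ∀ u, DeltaM r Y iseq jseq w b (g u) = cvec r iseq jseq u b := by
    intro u
    have hsel : ∃ u' : Fin t,
        ((Yat r Y (iseq u')).sort (· ≤ ·))[w u' - 1]? = some (g u) := ⟨u, hg u⟩
    unfold DeltaM
    rw [dif_pos hsel]
    have hspec := Classical.choose_spec hsel
    set u₀ := Classical.choose hsel
    obtain ⟨h₀, hm₀⟩ := mem_Yat (sel_mem_Yat hspec)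
    obtain ⟨hu, hmu⟩ := hmemg u
    have := uniqY hY hm₀ hmu
    have : iseq u₀ = iseq u := Fin.mk.inj_iff.mp this
    have : u₀ = u := (iseq_strictMono hP).injective this
    rw [this]
  have haOfg : ∀ u, ((Classical.choose (hY.2.1 (g u))) : Fin r).1 = iseq u := by
    intro u
    obtain ⟨hu, hmu⟩ := hmemg u
    have := uniqY hY (Classical.choose_spec (hY.2.1 (g u))) hmu
    rw [this]
  have key : (∑ c : Fin e, ((if DeltaM r Y iseq jseq w b c then (1:ℤ) else 0)
      - (if Ivec r ((Classical.choose (hY.2.1 c)) : Fin r).1 b then 1 else 0)))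
      = (if b.1+1 = r then (1:ℤ) else 0) - (if b.1+1 = 1 then 1 else 0) := by
    rw [← Finset.sum_subset (Finset.subset_univ (Finset.image g Finset.univ))
      (fun c _ hc => by rw [himg c hc, sub_self])]
    rw [Finset.sum_image (fun u _ v _ h => hginj h)]
    have : ∀ u : Fin t, ((if DeltaM r Y iseq jseq w b (g u) then (1:ℤ) else 0)
        - (if Ivec r ((Classical.choose (hY.2.1 (g u))) : Fin r).1 b then 1 else 0))
        = (if b.1+1 = jseq u.succ then (1:ℤ) else 0)
          - (if b.1+1 = jseq u.castSucc then 1 else 0) := by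
      intro u
      rw [hselg u, haOfg u]
      exact cvec_sub iseq jseq u b (hP.2.2.1 u) (hP.2.2.2.1 u)
    rw [Finset.sum_congr rfl fun u _ => this u, telescope jseq (b.1+1), hP.1, hP.2.1]
  have hcast : (rsum (DeltaM r Y iseq jseq w) b : ℤ)
      = ∑ c : Fin e, (if DeltaM r Y iseq jseq w b c then (1:ℤ) else 0) := by
    rw [rsum]
    push_cast
    rfl
  rw [hcast]
  rw [Finset.sum_sub_distrib] at key
  linarith
end Sums2

/-- Every element of `𝔑(Y,π)` is bead-swap equivalent to
`N₀(Y,π) = Δ^π(Y,((1),(1,r)),(1))`. -/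
theorem Nset_equiv_Nzero (e r : ℕ) (he : 2 ≤ e) (hr : 2 ≤ r)
    (Y : Fin r → Finset (Fin e)) (hY : LambdaMem r Y)
    (π : Equiv.Perm (Fin r))
    (M : Fin r → Fin e → Bool) (hM : M ∈ Nset r Y π) :
    Relation.EqvGen BeadSwap M (Nzero r Y π) := by
  obtain ⟨t, ht1, ht2, iseq, jseq, w, hP, hw, hMdef⟩ := hM
  have hr1 : (1:ℕ) < r := hr
  have hcard1 : 1 ≤ (Yat r Y 1).card := Finset.card_pos.mpr hY.2.2.1
  have hP0 : PtPairCond r 1 (fun a => (Yat r Y a).card) (fun _ : Fin 1 => 1) ![1, r] := by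
    refine ⟨rfl, rfl, ?_, ?_, ?_⟩
    · intro m
      have : m = 0 := Subsingleton.elim m 0
      subst this
      simp
    · intro m
      have : m = 0 := Subsingleton.elim m 0
      subst this
      simpa using hr1
    · intro m; exact hcard1
  have hw0 : ∀ u : Fin 1, 1 ≤ (fun _ : Fin 1 => 1) u ∧
      (fun _ : Fin 1 => 1) u ≤ (Yat r Y ((fun _ : Fin 1 => 1) u)).card :=
    fun u => ⟨le_refl 1, hcard1⟩
  subst hMdef
  apply ryser
  · intro s
    have h1 := rsum_DeltaM hY hP hw (π s)
    have h2 := rsum_DeltaM hY hP0 hw0 (π s)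
    have hM : rsum (fun s c => DeltaM r Y iseq jseq w (π s) c) s
        = rsum (DeltaM r Y iseq jseq w) (π s) := rfl
    have hN : rsum (Nzero r Y π) s
        = rsum (DeltaM r Y (fun _ : Fin 1 => 1) ![1, r] (fun _ : Fin 1 => 1)) (π s) := rfl
    rw [hM, hN]
    exact_mod_cast h1.trans h2.symm
  · intro c
    have h1 := csum_DeltaM hY hP hw c
    have h2 := csum_DeltaM hY hP0 hw0 c
    have hM : csum (fun s c => DeltaM r Y iseq jseq w (π s) c) c
        = csum (DeltaM r Y iseq jseq w) c :=
      Equiv.sum_comp π (fun s => if DeltaM r Y iseq jseq w s c then (1:ℕ) else 0)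
    have hN : csum (Nzero r Y π) c
        = csum (DeltaM r Y (fun _ : Fin 1 => 1) ![1, r] (fun _ : Fin 1 => 1)) c :=
      Equiv.sum_comp π
        (fun s => if DeltaM r Y (fun _ : Fin 1 => 1) ![1, r] (fun _ : Fin 1 => 1) s c
          then (1:ℕ) else 0)
    rw [hM, hN, h1, h2]



end
end AK
end

section
/- Let e ≥ 2, r ≥ 2, let Y ∈ Λ, let π be a permutation of {1,…,r}, let M ∈ 𝔑(Y,π) and let L ∈ M(r,e) with M ∼ L. Then L ∈ 𝔑(Y,π). -/
open scoped Classical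

namespace AK
noncomputable section



section BS

variable {e r : ℕ}

/-- Column `c` of a matrix. -/
def colOf {e r : ℕ} (D : Fin r → Fin e → Bool) (c : Fin e) : Fin r → Bool := fun s => D s c

/-- `v` is the interval column `I(a)`. -/
def IntervalCol {r : ℕ} (v : Fin r → Bool) (a : ℕ) : Prop :=
  ∀ s : Fin r, v s = decide (s.1 + 1 ≤ a)

/-- `v` is the swap column with level `a`, hole `p`, extra bead `q`. -/
def SwapColP {r : ℕ} (v : Fin r → Bool) (a p q : ℕ) : Prop :=
  1 ≤ p ∧ p ≤ a ∧ a < q ∧ q ≤ r ∧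
  ∀ s : Fin r, v s = decide ((s.1 + 1 ≤ a ∧ s.1 + 1 ≠ p) ∨ s.1 + 1 = q)

/-- Column `c` of `D` is a swap column whose interval `[p,q)` covers `x`. -/
def SwapAt {e r : ℕ} (Y : Fin r → Finset (Fin e)) (D : Fin r → Fin e → Bool)
    (c : Fin e) (x : ℕ) : Prop :=
  ∃ p q, (∃ a : Fin r, c ∈ Y a ∧ SwapColP (colOf D c) a.1 p q) ∧ p ≤ x ∧ x < q

/-- Abstract characterisation of membership in `𝔑(Y, id)`. -/
def CharY {e r : ℕ} (Y : Fin r → Finset (Fin e)) (D : Fin r → Fin e → Bool) : Prop :=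
  (∀ (c : Fin e) (a : Fin r), c ∈ Y a →
      IntervalCol (colOf D c) a.1 ∨ ∃ p q, SwapColP (colOf D c) a.1 p q) ∧
  (∀ x : ℕ, 1 ≤ x → x + 1 ≤ r → ∃! c : Fin e, SwapAt Y D c x)

lemma swap_ne_interval {v : Fin r → Bool} {a p q : ℕ} (hs : SwapColP v a p q)
    (hi : IntervalCol v a) : False := by
  obtain ⟨h1, h2, h3, h4, hv⟩ := hs
  have hp : p - 1 < r := by omega
  have h5 := (hv ⟨p - 1, hp⟩).symm.trans (hi ⟨p - 1, hp⟩)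
  rw [decide_eq_decide] at h5
  simp only at h5
  omega

lemma swapColP_unique {v : Fin r → Bool} {a p q p' q' : ℕ} (h : SwapColP v a p q)
    (h' : SwapColP v a p' q') : p = p' ∧ q = q' := by
  obtain ⟨h1, h2, h3, h4, hv⟩ := h
  obtain ⟨h1', h2', h3', h4', hv'⟩ := h'
  have hq : q - 1 < r := by omega
  have hp : p - 1 < r := by omega
  have e1 := (hv ⟨q - 1, hq⟩).symm.trans (hv' ⟨q - 1, hq⟩)
  have e2 := (hv ⟨p - 1, hp⟩).symm.trans (hv' ⟨p - 1, hp⟩)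
  rw [decide_eq_decide] at e1 e2
  simp only at e1 e2
  omega

lemma part_eq {Y : Fin r → Finset (Fin e)} (hY : LambdaMem r Y) {c : Fin e} {a b : Fin r}
    (ha : c ∈ Y a) (hb : c ∈ Y b) : a = b := by
  by_contra h
  exact Finset.disjoint_left.1 (hY.1 a b h) ha hb

lemma swapAt_iff_of {Y : Fin r → Finset (Fin e)} (hY : LambdaMem r Y)
    {D : Fin r → Fin e → Bool} {c : Fin e} {a : Fin r} {p q x : ℕ}
    (hc : c ∈ Y a) (hs : SwapColP (colOf D c) a.1 p q) :
    SwapAt Y D c x ↔ (p ≤ x ∧ x < q) := by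
  constructor
  · rintro ⟨p', q', ⟨a', hc', hs'⟩, hx1, hx2⟩
    have hae : a' = a := part_eq hY hc' hc
    rw [hae] at hs'
    obtain ⟨hp, hq⟩ := swapColP_unique hs hs'
    exact ⟨hp ▸ hx1, hq ▸ hx2⟩
  · rintro ⟨hx1, hx2⟩
    exact ⟨p, q, ⟨a, hc, hs⟩, hx1, hx2⟩

lemma swapAt_not_of {Y : Fin r → Finset (Fin e)} (hY : LambdaMem r Y)
    {D : Fin r → Fin e → Bool} {c : Fin e} {a : Fin r} {x : ℕ}
    (hc : c ∈ Y a) (hi : IntervalCol (colOf D c) a.1) : ¬ SwapAt Y D c x := by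
  rintro ⟨p, q, ⟨a', hc', hs⟩, _, _⟩
  rw [part_eq hY hc' hc] at hs
  exact swap_ne_interval hs hi

lemma eu_transfer {α : Type*} {P P' : α → Prop} {i j : α} (hij : i ≠ j)
    (hsame : ∀ c, c ≠ i → c ≠ j → (P' c ↔ P c))
    (hor : (P' i ∨ P' j) ↔ (P i ∨ P j))
    (hnand : ¬ (P' i ∧ P' j))
    (h : ∃! c, P c) : ∃! c, P' c := by
  obtain ⟨c₀, hc₀, huniq⟩ := h
  have key : ∀ c' : α, (P' c') → ∀ c : α, P' c → c = c' := by
    intro c' hc' c hc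
    by_cases hci : c = i
    · by_cases hcj' : c' = i
      · rw [hci, hcj']
      · by_cases hcj2 : c' = j
        · exact absurd ⟨hci ▸ hc, hcj2 ▸ hc'⟩ hnand
        · exfalso
          have hPc' : P c' := (hsame c' hcj' hcj2).1 hc'
          have h1 : c₀ = c' := (huniq c' hPc').symm
          rcases hor.1 (Or.inl (hci ▸ hc)) with h2 | h2
          · exact hcj' (h1 ▸ (huniq i h2).symm ▸ rfl)
          · exact hcj2 (h1 ▸ (huniq j h2).symm ▸ rfl)
    · by_cases hcj : c = j
      · by_cases hcj' : c' = j
        · rw [hcj, hcj']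
        · by_cases hci2 : c' = i
          · exact absurd ⟨hci2 ▸ hc', hcj ▸ hc⟩ hnand
          · exfalso
            have hPc' : P c' := (hsame c' hci2 hcj').1 hc'
            have h1 : c₀ = c' := (huniq c' hPc').symm
            rcases hor.1 (Or.inr (hcj ▸ hc)) with h2 | h2
            · exact hci2 (h1 ▸ (huniq i h2).symm ▸ rfl)
            · exact hcj' (h1 ▸ (huniq j h2).symm ▸ rfl)
      · -- c ∉ {i,j}
        have hPc : P c := (hsame c hci hcj).1 hc
        have h1 : c = c₀ := huniq c hPc
        by_cases hcj' : c' = i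
        · exfalso
          rcases hor.1 (Or.inl (hcj' ▸ hc')) with h2 | h2
          · exact hci (h1.trans (huniq i h2).symm)
          · exact hcj (h1.trans (huniq j h2).symm)
        · by_cases hcj2 : c' = j
          · exfalso
            rcases hor.1 (Or.inr (hcj2 ▸ hc')) with h2 | h2
            · exact hci (h1.trans (huniq i h2).symm)
            · exact hcj (h1.trans (huniq j h2).symm)
          · exact h1.trans ((huniq c' ((hsame c' hcj' hcj2).1 hc')).symm)
  -- existence
  by_cases hc0i : c₀ = i
  · rcases hor.2 (Or.inl (hc0i ▸ hc₀)) with h' | h'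
    · exact ⟨i, h', fun c hc => key i h' c hc⟩
    · exact ⟨j, h', fun c hc => key j h' c hc⟩
  · by_cases hc0j : c₀ = j
    · rcases hor.2 (Or.inr (hc0j ▸ hc₀)) with h' | h'
      · exact ⟨i, h', fun c hc => key i h' c hc⟩
      · exact ⟨j, h', fun c hc => key j h' c hc⟩
    · have : P' c₀ := (hsame c₀ hc0i hc0j).2 hc₀
      exact ⟨c₀, this, fun c hc => key c₀ this c hc⟩

/-- Generic lemma for recomputing an updated column. -/
lemma bool_eq_decide_of_iff {b : Bool} {P : Prop} [Decidable P] (h : b = true ↔ P) :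
    b = decide P := by
  by_cases hP : P
  · simp [hP, h.2 hP]
  · have : b ≠ true := fun hb => hP (h.1 hb)
    simp [hP]
    simpa using this

lemma update_col (P Q : ℕ → Prop) {v w : Fin r → Bool} {s t : Fin r}
    (hw : ∀ s', w s' = if s' = s then false else if s' = t then true else v s')
    (hv : ∀ s', v s' = true ↔ P (s'.1+1))
    (hs : ¬ Q (s.1+1)) (ht : Q (t.1+1))
    (hoth : ∀ s' : Fin r, s'.1 ≠ s.1 → s'.1 ≠ t.1 → (P (s'.1+1) ↔ Q (s'.1+1))) :
    ∀ s', w s' = true ↔ Q (s'.1+1) := by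
  intro s'
  rw [hw]
  split_ifs with h1 h2
  · subst h1; simp only [false_iff]; exact hs
  · subst h2; simp only [true_iff]; exact ht
  · rw [hv]
    exact hoth s' (fun h => h1 (Fin.ext h)) (fun h => h2 (Fin.ext h))

end BS
section BS2

variable {e r : ℕ}

lemma C1_step {Y : Fin r → Finset (Fin e)} (hY : LambdaMem r Y)
    {D D' : Fin r → Fin e → Bool} {i j : Fin e} {ai aj : Fin r}
    (hC1 : ∀ (c : Fin e) (a : Fin r), c ∈ Y a →
      IntervalCol (colOf D c) a.1 ∨ ∃ p q, SwapColP (colOf D c) a.1 p q)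
    (hsame : ∀ c, c ≠ i → c ≠ j → colOf D' c = colOf D c)
    (hai : i ∈ Y ai) (haj : j ∈ Y aj)
    (hi' : IntervalCol (colOf D' i) ai.1 ∨ ∃ p q, SwapColP (colOf D' i) ai.1 p q)
    (hj' : IntervalCol (colOf D' j) aj.1 ∨ ∃ p q, SwapColP (colOf D' j) aj.1 p q) :
    ∀ (c : Fin e) (a : Fin r), c ∈ Y a →
      IntervalCol (colOf D' c) a.1 ∨ ∃ p q, SwapColP (colOf D' c) a.1 p q := by
  intro c a hc
  by_cases h1 : c = i
  · subst h1; rw [part_eq hY hc hai]; exact hi'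
  · by_cases h2 : c = j
    · subst h2; rw [part_eq hY hc haj]; exact hj'
    · rw [hsame c h1 h2]; exact hC1 c a hc

lemma eu_step {Y : Fin r → Finset (Fin e)}
    {D D' : Fin r → Fin e → Bool} {i j : Fin e} (hij : i ≠ j)
    (hsame : ∀ c, c ≠ i → c ≠ j → colOf D' c = colOf D c)
    {pi qi pj qj pi' qi' pj' qj' : ℕ}
    (Hi : ∀ x, SwapAt Y D i x ↔ (pi ≤ x ∧ x < qi))
    (Hj : ∀ x, SwapAt Y D j x ↔ (pj ≤ x ∧ x < qj))
    (Hi' : ∀ x, SwapAt Y D' i x ↔ (pi' ≤ x ∧ x < qi'))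
    (Hj' : ∀ x, SwapAt Y D' j x ↔ (pj' ≤ x ∧ x < qj'))
    (hcover : ∀ x, ((pi' ≤ x ∧ x < qi') ∨ (pj' ≤ x ∧ x < qj')) ↔
      ((pi ≤ x ∧ x < qi) ∨ (pj ≤ x ∧ x < qj)))
    (hdisj : ∀ x, ¬ ((pi' ≤ x ∧ x < qi') ∧ (pj' ≤ x ∧ x < qj')))
    (hC2 : ∀ x : ℕ, 1 ≤ x → x + 1 ≤ r → ∃! c : Fin e, SwapAt Y D c x) :
    ∀ x : ℕ, 1 ≤ x → x + 1 ≤ r → ∃! c : Fin e, SwapAt Y D' c x := by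
  intro x h1 h2
  refine eu_transfer hij ?_ ?_ ?_ (hC2 x h1 h2)
  · intro c hc1 hc2
    simp only [SwapAt, hsame c hc1 hc2]
  · rw [Hi x, Hj x, Hi' x, Hj' x]; exact hcover x
  · rw [Hi' x, Hj' x]; exact hdisj x

/-- Encode "this column never covers anything" as the empty interval `[0,0)`. -/
lemma swapAt_iff_of_interval {Y : Fin r → Finset (Fin e)} (hY : LambdaMem r Y)
    {D : Fin r → Fin e → Bool} {c : Fin e} {a : Fin r}
    (hc : c ∈ Y a) (hi : IntervalCol (colOf D c) a.1) :
    ∀ x, SwapAt Y D c x ↔ (0 ≤ x ∧ x < 0) := fun x =>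
  iff_of_false (swapAt_not_of hY hc hi) (by omega)

lemma swapAt_iff_of' {Y : Fin r → Finset (Fin e)} (hY : LambdaMem r Y)
    {D : Fin r → Fin e → Bool} {c : Fin e} {a : Fin r} {p q : ℕ}
    (hc : c ∈ Y a) (hs : SwapColP (colOf D c) a.1 p q) :
    ∀ x, SwapAt Y D c x ↔ (p ≤ x ∧ x < q) := fun _ => swapAt_iff_of hY hc hs

end BS2
section BS3

variable {e r : ℕ}

lemma charY_beadSwap_main {Y : Fin r → Finset (Fin e)} (hY : LambdaMem r Y)
    {D D' : Fin r → Fin e → Bool} {i j : Fin e} {s t : Fin r} {ai aj : Fin r} {p q : ℕ}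
    (hC1 : ∀ (c : Fin e) (a : Fin r), c ∈ Y a →
      IntervalCol (colOf D c) a.1 ∨ ∃ p q, SwapColP (colOf D c) a.1 p q)
    (hC2 : ∀ x : ℕ, 1 ≤ x → x + 1 ≤ r → ∃! c : Fin e, SwapAt Y D c x)
    (hij : i ≠ j) (hst : s ≠ t)
    (m1 : D s i = true) (m2 : D t j = true) (m3 : D s j = false) (m4 : D t i = false)
    (coli : ∀ s', colOf D' i s' = if s' = s then false else if s' = t then true else colOf D i s')
    (colj : ∀ s', colOf D' j s' = if s' = t then false else if s' = s then true else colOf D j s')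
    (hsame : ∀ c, c ≠ i → c ≠ j → colOf D' c = colOf D c)
    (hai : i ∈ Y ai) (haj : j ∈ Y aj)
    (hswi : SwapColP (colOf D i) ai.1 p q)
    (hj : IntervalCol (colOf D j) aj.1 ∨ ∃ p2 q2, SwapColP (colOf D j) aj.1 p2 q2 ∧ q ≤ p2) :
    CharY Y D' := by
  have hp1 := hswi.1
  have hpa := hswi.2.1
  have haq := hswi.2.2.1
  have hqr := hswi.2.2.2.1
  have hvi := hswi.2.2.2.2
  have hvi' : ∀ s', colOf D i s' = true ↔ ((s'.1+1 ≤ ai.1 ∧ s'.1+1 ≠ p) ∨ s'.1+1 = q) :=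
    fun s' => by rw [hvi s']; exact decide_eq_true_iff
  have hstv : s.1 ≠ t.1 := fun h => hst (Fin.ext h)
  have Ei1 : (s.1+1 ≤ ai.1 ∧ s.1+1 ≠ p) ∨ s.1+1 = q := by
    have h := hvi s; rw [show colOf D i s = D s i from rfl, m1] at h
    exact of_decide_eq_true h.symm
  have Ei2 : ¬ ((t.1+1 ≤ ai.1 ∧ t.1+1 ≠ p) ∨ t.1+1 = q) := by
    have h := hvi t; rw [show colOf D i t = D t i from rfl, m4] at h
    exact of_decide_eq_false h.symm
  have hsr : s.1 + 1 ≤ r := s.2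
  have htr : t.1 + 1 ≤ r := t.2
  rcases hj with hIj | ⟨p2, q2, hswj, hqp2⟩
  · -- column j is an interval column
    have hIj' : ∀ s', colOf D j s' = true ↔ (s'.1+1 ≤ aj.1) :=
      fun s' => by rw [hIj s']; exact decide_eq_true_iff
    have Ej1 : t.1+1 ≤ aj.1 := by
      have h := hIj t; rw [show colOf D j t = D t j from rfl, m2] at h
      exact of_decide_eq_true h.symm
    have Ej2 : ¬ (s.1+1 ≤ aj.1) := by
      have h := hIj s; rw [show colOf D j s = D s j from rfl, m3] at h
      exact of_decide_eq_false h.symm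
    have hNj : SwapColP (colOf D' j) aj.1 (t.1+1) (s.1+1) := by
      refine ⟨by omega, Ej1, by omega, hsr, ?_⟩
      have h0 := update_col (fun n => n ≤ aj.1) (fun n => (n ≤ aj.1 ∧ n ≠ t.1+1) ∨ n = s.1+1)
        colj hIj'
        (by show ¬ ((t.1+1 ≤ aj.1 ∧ t.1+1 ≠ t.1+1) ∨ t.1+1 = s.1+1); omega)
        (by show (s.1+1 ≤ aj.1 ∧ s.1+1 ≠ t.1+1) ∨ s.1+1 = s.1+1; omega)
        (by intro s' h1 h2
            show s'.1+1 ≤ aj.1 ↔ ((s'.1+1 ≤ aj.1 ∧ s'.1+1 ≠ t.1+1) ∨ s'.1+1 = s.1+1)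
            omega)
      exact fun s' => bool_eq_decide_of_iff (h0 s')
    by_cases hsq : s.1+1 = q
    · by_cases htp : t.1+1 = p
      · -- subcase α
        have hNi : IntervalCol (colOf D' i) ai.1 := by
          have h0 := update_col (fun n => (n ≤ ai.1 ∧ n ≠ p) ∨ n = q) (fun n => n ≤ ai.1)
            coli hvi'
            (by show ¬ (s.1+1 ≤ ai.1); omega)
            (by show t.1+1 ≤ ai.1; omega)
            (by intro s' h1 h2
                show ((s'.1+1 ≤ ai.1 ∧ s'.1+1 ≠ p) ∨ s'.1+1 = q) ↔ s'.1+1 ≤ ai.1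
                omega)
          exact fun s' => bool_eq_decide_of_iff (h0 s')
        refine ⟨C1_step hY hC1 hsame hai haj (Or.inl hNi) (Or.inr ⟨_, _, hNj⟩), ?_⟩
        exact eu_step hij hsame (swapAt_iff_of' hY hai hswi)
          (swapAt_iff_of_interval hY haj hIj) (swapAt_iff_of_interval hY hai hNi)
          (swapAt_iff_of' hY haj hNj) (fun x => by omega) (fun x => by omega) hC2
      · -- subcase β
        have hta : ai.1 < t.1+1 ∧ t.1+1 ≠ q := by omega
        have hNi : SwapColP (colOf D' i) ai.1 p (t.1+1) := by
          refine ⟨hp1, hpa, hta.1, htr, ?_⟩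
          have h0 := update_col (fun n => (n ≤ ai.1 ∧ n ≠ p) ∨ n = q)
            (fun n => (n ≤ ai.1 ∧ n ≠ p) ∨ n = t.1+1) coli hvi'
            (by show ¬ ((s.1+1 ≤ ai.1 ∧ s.1+1 ≠ p) ∨ s.1+1 = t.1+1); omega)
            (by show (t.1+1 ≤ ai.1 ∧ t.1+1 ≠ p) ∨ t.1+1 = t.1+1; omega)
            (by intro s' h1 h2
                show ((s'.1+1 ≤ ai.1 ∧ s'.1+1 ≠ p) ∨ s'.1+1 = q) ↔
                  ((s'.1+1 ≤ ai.1 ∧ s'.1+1 ≠ p) ∨ s'.1+1 = t.1+1)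
                omega)
          exact fun s' => bool_eq_decide_of_iff (h0 s')
        refine ⟨C1_step hY hC1 hsame hai haj (Or.inr ⟨_, _, hNi⟩) (Or.inr ⟨_, _, hNj⟩), ?_⟩
        exact eu_step hij hsame (swapAt_iff_of' hY hai hswi)
          (swapAt_iff_of_interval hY haj hIj) (swapAt_iff_of' hY hai hNi)
          (swapAt_iff_of' hY haj hNj) (fun x => by omega) (fun x => by omega) hC2
    · -- subcase γ (t.1+1 = p forced)
      have hsa : s.1+1 ≤ ai.1 ∧ s.1+1 ≠ p := by omega
      by_cases htp : t.1+1 = p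
      · have hNi : SwapColP (colOf D' i) ai.1 (s.1+1) q := by
          refine ⟨by omega, hsa.1, haq, hqr, ?_⟩
          have h0 := update_col (fun n => (n ≤ ai.1 ∧ n ≠ p) ∨ n = q)
            (fun n => (n ≤ ai.1 ∧ n ≠ s.1+1) ∨ n = q) coli hvi'
            (by show ¬ ((s.1+1 ≤ ai.1 ∧ s.1+1 ≠ s.1+1) ∨ s.1+1 = q); omega)
            (by show (t.1+1 ≤ ai.1 ∧ t.1+1 ≠ s.1+1) ∨ t.1+1 = q; omega)
            (by intro s' h1 h2
                show ((s'.1+1 ≤ ai.1 ∧ s'.1+1 ≠ p) ∨ s'.1+1 = q) ↔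
                  ((s'.1+1 ≤ ai.1 ∧ s'.1+1 ≠ s.1+1) ∨ s'.1+1 = q)
                omega)
          exact fun s' => bool_eq_decide_of_iff (h0 s')
        refine ⟨C1_step hY hC1 hsame hai haj (Or.inr ⟨_, _, hNi⟩) (Or.inr ⟨_, _, hNj⟩), ?_⟩
        exact eu_step hij hsame (swapAt_iff_of' hY hai hswi)
          (swapAt_iff_of_interval hY haj hIj) (swapAt_iff_of' hY hai hNi)
          (swapAt_iff_of' hY haj hNj) (fun x => by omega) (fun x => by omega) hC2
      · exfalso; omega
  · -- column j is a swap column with q ≤ p2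
    have hp21 := hswj.1
    have hp2b := hswj.2.1
    have hbq2 := hswj.2.2.1
    have hq2r := hswj.2.2.2.1
    have hvj := hswj.2.2.2.2
    have hvj' : ∀ s', colOf D j s' = true ↔ ((s'.1+1 ≤ aj.1 ∧ s'.1+1 ≠ p2) ∨ s'.1+1 = q2) :=
      fun s' => by rw [hvj s']; exact decide_eq_true_iff
    have Ej1 : (t.1+1 ≤ aj.1 ∧ t.1+1 ≠ p2) ∨ t.1+1 = q2 := by
      have h := hvj t; rw [show colOf D j t = D t j from rfl, m2] at h
      exact of_decide_eq_true h.symm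
    have Ej2 : ¬ ((s.1+1 ≤ aj.1 ∧ s.1+1 ≠ p2) ∨ s.1+1 = q2) := by
      have h := hvj s; rw [show colOf D j s = D s j from rfl, m3] at h
      exact of_decide_eq_false h.symm
    have hsq : s.1+1 = q := by omega
    have hqp2' : q = p2 := by omega
    by_cases htp : t.1+1 = p
    · -- subcase δ
      have hNi : IntervalCol (colOf D' i) ai.1 := by
        have h0 := update_col (fun n => (n ≤ ai.1 ∧ n ≠ p) ∨ n = q) (fun n => n ≤ ai.1)
          coli hvi'
          (by show ¬ (s.1+1 ≤ ai.1); omega)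
          (by show t.1+1 ≤ ai.1; omega)
          (by intro s' h1 h2
              show ((s'.1+1 ≤ ai.1 ∧ s'.1+1 ≠ p) ∨ s'.1+1 = q) ↔ s'.1+1 ≤ ai.1
              omega)
        exact fun s' => bool_eq_decide_of_iff (h0 s')
      have hNj : SwapColP (colOf D' j) aj.1 p q2 := by
        refine ⟨hp1, by omega, hbq2, hq2r, ?_⟩
        have h0 := update_col (fun n => (n ≤ aj.1 ∧ n ≠ p2) ∨ n = q2)
          (fun n => (n ≤ aj.1 ∧ n ≠ p) ∨ n = q2) colj hvj'
          (by show ¬ ((t.1+1 ≤ aj.1 ∧ t.1+1 ≠ p) ∨ t.1+1 = q2); omega)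
          (by show (s.1+1 ≤ aj.1 ∧ s.1+1 ≠ p) ∨ s.1+1 = q2; omega)
          (by intro s' h1 h2
              show ((s'.1+1 ≤ aj.1 ∧ s'.1+1 ≠ p2) ∨ s'.1+1 = q2) ↔
                ((s'.1+1 ≤ aj.1 ∧ s'.1+1 ≠ p) ∨ s'.1+1 = q2)
              omega)
        exact fun s' => bool_eq_decide_of_iff (h0 s')
      refine ⟨C1_step hY hC1 hsame hai haj (Or.inl hNi) (Or.inr ⟨_, _, hNj⟩), ?_⟩
      exact eu_step hij hsame (swapAt_iff_of' hY hai hswi)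
        (swapAt_iff_of' hY haj hswj) (swapAt_iff_of_interval hY hai hNi)
        (swapAt_iff_of' hY haj hNj) (fun x => by omega) (fun x => by omega) hC2
    · have hta : ai.1 < t.1+1 ∧ t.1+1 ≠ q := by omega
      by_cases htq2 : t.1+1 = q2
      · -- subcase ζ
        have hNi : SwapColP (colOf D' i) ai.1 p q2 := by
          refine ⟨hp1, hpa, by omega, hq2r, ?_⟩
          have h0 := update_col (fun n => (n ≤ ai.1 ∧ n ≠ p) ∨ n = q)
            (fun n => (n ≤ ai.1 ∧ n ≠ p) ∨ n = q2) coli hvi'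
            (by show ¬ ((s.1+1 ≤ ai.1 ∧ s.1+1 ≠ p) ∨ s.1+1 = q2); omega)
            (by show (t.1+1 ≤ ai.1 ∧ t.1+1 ≠ p) ∨ t.1+1 = q2; omega)
            (by intro s' h1 h2
                show ((s'.1+1 ≤ ai.1 ∧ s'.1+1 ≠ p) ∨ s'.1+1 = q) ↔
                  ((s'.1+1 ≤ ai.1 ∧ s'.1+1 ≠ p) ∨ s'.1+1 = q2)
                omega)
          exact fun s' => bool_eq_decide_of_iff (h0 s')
        have hNj : IntervalCol (colOf D' j) aj.1 := by
          have h0 := update_col (fun n => (n ≤ aj.1 ∧ n ≠ p2) ∨ n = q2) (fun n => n ≤ aj.1)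
            colj hvj'
            (by show ¬ (t.1+1 ≤ aj.1); omega)
            (by show s.1+1 ≤ aj.1; omega)
            (by intro s' h1 h2
                show ((s'.1+1 ≤ aj.1 ∧ s'.1+1 ≠ p2) ∨ s'.1+1 = q2) ↔ s'.1+1 ≤ aj.1
                omega)
          exact fun s' => bool_eq_decide_of_iff (h0 s')
        refine ⟨C1_step hY hC1 hsame hai haj (Or.inr ⟨_, _, hNi⟩) (Or.inl hNj), ?_⟩
        exact eu_step hij hsame (swapAt_iff_of' hY hai hswi)
          (swapAt_iff_of' hY haj hswj) (swapAt_iff_of' hY hai hNi)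
          (swapAt_iff_of_interval hY haj hNj) (fun x => by omega) (fun x => by omega) hC2
      · -- subcase ε
        have htb : t.1+1 ≤ aj.1 ∧ t.1+1 ≠ p2 := by omega
        have hNi : SwapColP (colOf D' i) ai.1 p (t.1+1) := by
          refine ⟨hp1, hpa, hta.1, htr, ?_⟩
          have h0 := update_col (fun n => (n ≤ ai.1 ∧ n ≠ p) ∨ n = q)
            (fun n => (n ≤ ai.1 ∧ n ≠ p) ∨ n = t.1+1) coli hvi'
            (by show ¬ ((s.1+1 ≤ ai.1 ∧ s.1+1 ≠ p) ∨ s.1+1 = t.1+1); omega)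
            (by show (t.1+1 ≤ ai.1 ∧ t.1+1 ≠ p) ∨ t.1+1 = t.1+1; omega)
            (by intro s' h1 h2
                show ((s'.1+1 ≤ ai.1 ∧ s'.1+1 ≠ p) ∨ s'.1+1 = q) ↔
                  ((s'.1+1 ≤ ai.1 ∧ s'.1+1 ≠ p) ∨ s'.1+1 = t.1+1)
                omega)
          exact fun s' => bool_eq_decide_of_iff (h0 s')
        have hNj : SwapColP (colOf D' j) aj.1 (t.1+1) q2 := by
          refine ⟨by omega, htb.1, hbq2, hq2r, ?_⟩
          have h0 := update_col (fun n => (n ≤ aj.1 ∧ n ≠ p2) ∨ n = q2)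
            (fun n => (n ≤ aj.1 ∧ n ≠ t.1+1) ∨ n = q2) colj hvj'
            (by show ¬ ((t.1+1 ≤ aj.1 ∧ t.1+1 ≠ t.1+1) ∨ t.1+1 = q2); omega)
            (by show (s.1+1 ≤ aj.1 ∧ s.1+1 ≠ t.1+1) ∨ s.1+1 = q2; omega)
            (by intro s' h1 h2
                show ((s'.1+1 ≤ aj.1 ∧ s'.1+1 ≠ p2) ∨ s'.1+1 = q2) ↔
                  ((s'.1+1 ≤ aj.1 ∧ s'.1+1 ≠ t.1+1) ∨ s'.1+1 = q2)
                omega)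
          exact fun s' => bool_eq_decide_of_iff (h0 s')
        refine ⟨C1_step hY hC1 hsame hai haj (Or.inr ⟨_, _, hNi⟩) (Or.inr ⟨_, _, hNj⟩), ?_⟩
        exact eu_step hij hsame (swapAt_iff_of' hY hai hswi)
          (swapAt_iff_of' hY haj hswj) (swapAt_iff_of' hY hai hNi)
          (swapAt_iff_of' hY haj hNj) (fun x => by omega) (fun x => by omega) hC2

end BS3
section BS4

variable {e r : ℕ}

lemma charY_beadSwap {Y : Fin r → Finset (Fin e)} (hY : LambdaMem r Y)
    {D D' : Fin r → Fin e → Bool} (hbs : BeadSwap D D') (hch : CharY Y D) : CharY Y D' := by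
  obtain ⟨i, j, hij, s, t, hst, m1, m2, m3, m4, n1, n2, n3, n4, hoth⟩ := hbs
  obtain ⟨C1, C2⟩ := hch
  have coli : ∀ s', colOf D' i s' =
      if s' = s then false else if s' = t then true else colOf D i s' := by
    intro s'; split_ifs with h1 h2
    · rw [show colOf D' i s' = D' s' i from rfl, h1]; exact n1
    · rw [show colOf D' i s' = D' s' i from rfl, h2]; exact n4
    · exact hoth s' i (Or.inl ⟨h1, h2⟩)
  have colj : ∀ s', colOf D' j s' =
      if s' = t then false else if s' = s then true else colOf D j s' := by
    intro s'; split_ifs with h1 h2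
    · rw [show colOf D' j s' = D' s' j from rfl, h1]; exact n2
    · rw [show colOf D' j s' = D' s' j from rfl, h2]; exact n3
    · exact hoth s' j (Or.inl ⟨h2, h1⟩)
  have hsame : ∀ c, c ≠ i → c ≠ j → colOf D' c = colOf D c :=
    fun c h1 h2 => funext fun s' => hoth s' c (Or.inr ⟨h1, h2⟩)
  have hsame' : ∀ c, c ≠ j → c ≠ i → colOf D' c = colOf D c := fun c h1 h2 => hsame c h2 h1
  obtain ⟨ai, hai⟩ := hY.2.1 i
  obtain ⟨aj, haj⟩ := hY.2.1 j
  rcases C1 i ai hai with hIi | ⟨p, q, hswi⟩ <;> rcases C1 j aj haj with hIj | ⟨p2, q2, hswj⟩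
  · -- both intervals : impossible
    exfalso
    have e1 : s.1+1 ≤ ai.1 := by
      have h := hIi s; rw [show colOf D i s = D s i from rfl, m1] at h
      exact of_decide_eq_true h.symm
    have e2 : ¬ (t.1+1 ≤ ai.1) := by
      have h := hIi t; rw [show colOf D i t = D t i from rfl, m4] at h
      exact of_decide_eq_false h.symm
    have e3 : t.1+1 ≤ aj.1 := by
      have h := hIj t; rw [show colOf D j t = D t j from rfl, m2] at h
      exact of_decide_eq_true h.symm
    have e4 : ¬ (s.1+1 ≤ aj.1) := by
      have h := hIj s; rw [show colOf D j s = D s j from rfl, m3] at h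
      exact of_decide_eq_false h.symm
    omega
  · -- i interval, j swap : use symmetry
    exact charY_beadSwap_main hY C1 C2 hij.symm hst.symm m2 m1 m4 m3 colj coli hsame'
      haj hai hswj (Or.inl hIi)
  · -- i swap, j interval
    exact charY_beadSwap_main hY C1 C2 hij hst m1 m2 m3 m4 coli colj hsame
      hai haj hswi (Or.inl hIj)
  · -- both swap columns
    have hd : q ≤ p2 ∨ q2 ≤ p := by
      by_contra hcon
      push_neg at hcon
      obtain ⟨hd1, hd2⟩ := hcon
      have hb1 := hswi.1; have hb2 := hswi.2.1; have hb3 := hswi.2.2.1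
      have hb4 := hswi.2.2.2.1
      have hc1 := hswj.1; have hc2 := hswj.2.1; have hc3 := hswj.2.2.1
      have hc4 := hswj.2.2.2.1
      rcases le_total p p2 with hle | hle
      · obtain ⟨c₀, -, hu⟩ := C2 p2 (by omega) (by omega)
        have e1 : i = c₀ := hu i ⟨p, q, ⟨ai, hai, hswi⟩, by omega, by omega⟩
        have e2 : j = c₀ := hu j ⟨p2, q2, ⟨aj, haj, hswj⟩, by omega, by omega⟩
        exact hij (e1.trans e2.symm)
      · obtain ⟨c₀, -, hu⟩ := C2 p (by omega) (by omega)
        have e1 : i = c₀ := hu i ⟨p, q, ⟨ai, hai, hswi⟩, by omega, by omega⟩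
        have e2 : j = c₀ := hu j ⟨p2, q2, ⟨aj, haj, hswj⟩, by omega, by omega⟩
        exact hij (e1.trans e2.symm)
    rcases hd with hd | hd
    · exact charY_beadSwap_main hY C1 C2 hij hst m1 m2 m3 m4 coli colj hsame
        hai haj hswi (Or.inr ⟨p2, q2, hswj, hd⟩)
    · exact charY_beadSwap_main hY C1 C2 hij.symm hst.symm m2 m1 m4 m3 colj coli hsame'
        haj hai hswj (Or.inr ⟨p, q, hswi, hd⟩)

lemma beadSwap_symm {D D' : Fin r → Fin e → Bool} (h : BeadSwap D D') : BeadSwap D' D := by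
  obtain ⟨i, j, hij, s, t, hst, m1, m2, m3, m4, n1, n2, n3, n4, hoth⟩ := h
  exact ⟨j, i, hij.symm, s, t, hst, n3, n4, n1, n2, m3, m4, m1, m2,
    fun s' i' h' => (hoth s' i' (h'.imp id (fun hh => ⟨hh.2, hh.1⟩))).symm⟩

end BS4
section BS5

variable {e r : ℕ}

lemma charY_of_delta (hr : 2 ≤ r) {Y : Fin r → Finset (Fin e)} (hY : LambdaMem r Y)
    {t : ℕ} (ht1 : 1 ≤ t)
    {iseq : Fin t → ℕ} {jseq : Fin (t + 1) → ℕ} {w : Fin t → ℕ}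
    (hcond : PtPairCond r t (fun a => (Yat r Y a).card) iseq jseq)
    (hw : ∀ u, 1 ≤ w u ∧ w u ≤ (Yat r Y (iseq u)).card) :
    CharY Y (DeltaM r Y iseq jseq w) := by
  obtain ⟨hj0, hjlast, hji, hij2, hy1⟩ := hcond
  have hmonoj : StrictMono jseq :=
    Fin.strictMono_iff_lt_succ.2 (fun u => lt_of_le_of_lt (hji u) (hij2 u))
  have hj1 : ∀ v, 1 ≤ jseq v := by
    intro v; rw [← hj0]; exact hmonoj.monotone (Fin.zero_le v)
  have hjr : ∀ v, jseq v ≤ r := by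
    intro v; rw [← hjlast]; exact hmonoj.monotone (Fin.le_last v)
  have hilt : ∀ u : Fin t, iseq u < r := fun u => lt_of_lt_of_le (hij2 u) (hjr u.succ)
  have hYat : ∀ u : Fin t, Yat r Y (iseq u) = Y ⟨iseq u, hilt u⟩ := fun u => dif_pos _
  have hlen : ∀ u, w u - 1 < ((Yat r Y (iseq u)).sort (· ≤ ·)).length := by
    intro u; rw [Finset.length_sort]; have := hw u; omega
  set sc : Fin t → Fin e :=
    fun u => ((Yat r Y (iseq u)).sort (· ≤ ·)).get ⟨w u - 1, hlen u⟩ with hsc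
  have hget : ∀ u, ((Yat r Y (iseq u)).sort (· ≤ ·))[w u - 1]? = some (sc u) :=
    fun u => List.getElem?_eq_getElem (hlen u)
  have hscY : ∀ u, sc u ∈ Y ⟨iseq u, hilt u⟩ := by
    intro u; rw [← hYat]; exact (Finset.mem_sort _).1 (List.get_mem _ _)
  have hmonoi : StrictMono iseq := by
    intro u v huv
    calc iseq u < jseq u.succ := hij2 u
    _ ≤ jseq v.castSucc := hmonoj.monotone (by
        simp only [Fin.le_def, Fin.val_succ, Fin.coe_castSucc]; exact huv)
    _ ≤ iseq v := hji v
  have hscinj : Function.Injective sc := by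
    intro u v huv
    by_contra hne
    have hne2 : (⟨iseq u, hilt u⟩ : Fin r) ≠ ⟨iseq v, hilt v⟩ := by
      simp only [ne_eq, Fin.mk.injEq]
      exact fun h => hne (hmonoi.injective h)
    exact Finset.disjoint_left.1 (hY.1 _ _ hne2) (hscY u) (huv ▸ hscY v)
  have hcond_iff : ∀ c : Fin e,
      (∃ u : Fin t, ((Yat r Y (iseq u)).sort (· ≤ ·))[w u - 1]? = some c) ↔
      (∃ u, sc u = c) := by
    intro c
    refine exists_congr fun u => ?_
    rw [hget u]
    exact ⟨fun h => Option.some_injective _ h, fun h => h ▸ rfl⟩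
  have hcol_special : ∀ u (s : Fin r),
      DeltaM r Y iseq jseq w s (sc u) = cvec r iseq jseq u s := by
    intro u s
    have hex : ∃ u', ((Yat r Y (iseq u')).sort (· ≤ ·))[w u' - 1]? = some (sc u) :=
      ⟨u, hget u⟩
    simp only [DeltaM]
    rw [dif_pos hex]
    have hch := Classical.choose_spec hex
    rw [hget (Classical.choose hex)] at hch
    rw [hscinj (Option.some_injective _ hch)]
  have hswap_special : ∀ u, SwapColP (colOf (DeltaM r Y iseq jseq w) (sc u)) (iseq u)
      (jseq u.castSucc) (jseq u.succ) := by
    intro u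
    refine ⟨hj1 _, hji u, hij2 u, hjr _, ?_⟩
    intro s
    rw [show colOf (DeltaM r Y iseq jseq w) (sc u) s = DeltaM r Y iseq jseq w s (sc u) from rfl,
      hcol_special u s]
    have h1 := hji u
    have h2 := hij2 u
    unfold cvec
    split_ifs with hb1 hb2
    · rw [decide_eq_decide]; omega
    · rw [decide_eq_decide]; omega
    · rw [decide_eq_decide]; omega
  have hcol_plain : ∀ c : Fin e, (¬ ∃ u, sc u = c) → ∀ (a : Fin r), c ∈ Y a →
      ∀ s, DeltaM r Y iseq jseq w s c = decide (s.1 + 1 ≤ a.1) := by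
    intro c hns a hca s
    simp only [DeltaM]
    rw [dif_neg (fun hex => hns ((hcond_iff c).1 hex))]
    have h2 : ∃ a', c ∈ Y a' := ⟨a, hca⟩
    rw [dif_pos h2, part_eq hY (Classical.choose_spec h2) hca]
    rfl
  constructor
  · -- C1
    intro c a hca
    by_cases hc : ∃ u, sc u = c
    · obtain ⟨u, rfl⟩ := hc
      right
      have ha : a = ⟨iseq u, hilt u⟩ := part_eq hY hca (hscY u)
      refine ⟨jseq u.castSucc, jseq u.succ, ?_⟩
      rw [ha]
      exact hswap_special u
    · exact Or.inl (fun s => hcol_plain c hc a hca s)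
  · -- C2
    intro x hx1 hx2
    classical
    set F := Finset.univ.filter (fun v : Fin (t+1) => jseq v ≤ x) with hF
    have hF0 : (0 : Fin (t+1)) ∈ F := by
      simp only [hF, Finset.mem_filter, Finset.mem_univ, true_and, hj0]
      omega
    set v₀ := F.max' ⟨0, hF0⟩ with hv₀def
    have hv₀ : v₀ ∈ F := F.max'_mem _
    have hv₀x : jseq v₀ ≤ x := (Finset.mem_filter.1 hv₀).2
    have hv₀last : v₀ ≠ Fin.last t := by
      intro h
      rw [h, hjlast] at hv₀x
      omega
    have hltv : v₀.1 < t := by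
      have h1 : v₀.1 < t + 1 := v₀.2
      have h2 : v₀.1 ≠ t := fun h => hv₀last (Fin.ext h)
      omega
    set u : Fin t := ⟨v₀.1, hltv⟩ with hu
    have hcs : u.castSucc = v₀ := Fin.ext rfl
    have hsuccx : ¬ (jseq u.succ ≤ x) := by
      intro hle
      have hmem : u.succ ∈ F := by
        simp only [hF, Finset.mem_filter, Finset.mem_univ, true_and]
        exact hle
      have hle2 : u.succ ≤ v₀ := F.le_max' _ hmem
      rw [← hcs] at hle2
      have : (u.castSucc : Fin (t+1)) < u.succ := Fin.castSucc_lt_succ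
      exact absurd (lt_of_lt_of_le this hle2) (lt_irrefl _)
    have hxlow : jseq u.castSucc ≤ x := by rw [hcs]; exact hv₀x
    refine ⟨sc u, ⟨jseq u.castSucc, jseq u.succ,
      ⟨⟨iseq u, hilt u⟩, hscY u, hswap_special u⟩, hxlow, by omega⟩, ?_⟩
    intro c' hc'
    obtain ⟨p', q', ⟨a', hca', hsw'⟩, hx3, hx4⟩ := hc'
    by_cases hcs' : ∃ u', sc u' = c'
    · obtain ⟨u', rfl⟩ := hcs'
      have ha' : a' = ⟨iseq u', hilt u'⟩ := part_eq hY hca' (hscY u')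
      rw [ha'] at hsw'
      obtain ⟨hp', hq'⟩ := swapColP_unique hsw' (hswap_special u')
      have huu : u' = u := by
        rcases lt_trichotomy u' u with hlt | heq | hlt
        · exfalso
          have hle : jseq u'.succ ≤ jseq u.castSucc := hmonoj.monotone (by
            simp only [Fin.le_def, Fin.val_succ, Fin.coe_castSucc]; exact hlt)
          omega
        · exact heq
        · exfalso
          have hle : jseq u.succ ≤ jseq u'.castSucc := hmonoj.monotone (by
            simp only [Fin.le_def, Fin.val_succ, Fin.coe_castSucc]; exact hlt)
          have hle2 : jseq u'.castSucc ≤ x := by omega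
          omega
      rw [huu]
    · exfalso
      exact swap_ne_interval hsw' (fun s => hcol_plain c' hcs' a' hca' s)

end BS5
section BS6

variable {e r : ℕ}

lemma delta_of_charY (hr : 2 ≤ r) {Y : Fin r → Finset (Fin e)} (hY : LambdaMem r Y)
    {D : Fin r → Fin e → Bool} (hch : CharY Y D) :
    ∃ t, 1 ≤ t ∧ t ≤ r - 1 ∧
      ∃ (iseq : Fin t → ℕ) (jseq : Fin (t + 1) → ℕ) (w : Fin t → ℕ),
        PtPairCond r t (fun a => (Yat r Y a).card) iseq jseq ∧
        (∀ u, 1 ≤ w u ∧ w u ≤ (Yat r Y (iseq u)).card) ∧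
        D = DeltaM r Y iseq jseq w := by
  classical
  obtain ⟨C1, C2⟩ := hch
  obtain ⟨cone, -, -⟩ := C2 1 le_rfl (by omega)
  haveI : Nonempty (Fin e) := ⟨cone⟩
  set S : Finset ℕ := (Finset.range r).filter
    (fun a => ∃ c : Fin e, ∃ p q : ℕ,
      (∃ ha : a < r, c ∈ Y ⟨a, ha⟩) ∧ SwapColP (colOf D c) a p q) with hS
  have hpick : ∀ a ∈ S, ∃ (c : Fin e) (p q : ℕ),
      (∃ ha : a < r, c ∈ Y ⟨a, ha⟩) ∧ SwapColP (colOf D c) a p q :=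
    fun a ha => (Finset.mem_filter.1 ha).2
  choose! colS pS qS hprop using hpick
  have halt : ∀ a ∈ S, a < r := fun a ha => Finset.mem_range.1 (Finset.mem_filter.1 ha).1
  have hYmem : ∀ a (ha : a ∈ S), colS a ∈ Y ⟨a, halt a ha⟩ := by
    intro a ha
    obtain ⟨h, hm⟩ := (hprop a ha).1
    exact hm
  have hswS : ∀ a (ha : a ∈ S), SwapColP (colOf D (colS a)) a (pS a) (qS a) :=
    fun a ha => (hprop a ha).2
  -- identify arbitrary swap data with the chosen one
  have hident : ∀ (c : Fin e) (a' : Fin r) (p q : ℕ), c ∈ Y a' →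
      SwapColP (colOf D c) a'.1 p q →
      a'.1 ∈ S ∧ colS a'.1 = c ∧ pS a'.1 = p ∧ qS a'.1 = q := by
    intro c a' p q hc hsw
    have haS : a'.1 ∈ S := Finset.mem_filter.2
      ⟨Finset.mem_range.2 a'.2, c, p, q, ⟨a'.2, hc⟩, hsw⟩
    have hb1 := hsw.1; have hb2 := hsw.2.1; have hb3 := hsw.2.2.1; have hb4 := hsw.2.2.2.1
    have hc1 := (hswS _ haS).1; have hc2 := (hswS _ haS).2.1
    have hc3 := (hswS _ haS).2.2.1
    obtain ⟨c₀, -, hu⟩ := C2 a'.1 (by omega) (by omega)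
    have e1 : c = c₀ := hu c ⟨p, q, ⟨a', hc, hsw⟩, by omega, by omega⟩
    have e2 : colS a'.1 = c₀ := hu _
      ⟨pS a'.1, qS a'.1, ⟨⟨a'.1, a'.2⟩, hYmem _ haS, hswS _ haS⟩, by omega, by omega⟩
    have ec : colS a'.1 = c := e2.trans e1.symm
    have hsw2 := hswS _ haS
    rw [ec] at hsw2
    obtain ⟨hp, hq⟩ := swapColP_unique hsw2 hsw
    exact ⟨haS, ec, hp, hq⟩
  -- intervals of distinct swap parts are ordered
  have hord : ∀ a ∈ S, ∀ b ∈ S, a < b → qS a ≤ pS b := by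
    intro a ha b hb hab
    by_contra hcon
    push_neg at hcon
    have ha1 := (hswS a ha).1; have ha2 := (hswS a ha).2.1
    have ha3 := (hswS a ha).2.2.1; have ha4 := (hswS a ha).2.2.2.1
    have hb1 := (hswS b hb).1; have hb2 := (hswS b hb).2.1
    have hb3 := (hswS b hb).2.2.1; have hb4 := (hswS b hb).2.2.2.1
    have hface : ∀ x, 1 ≤ x → x + 1 ≤ r → (pS a ≤ x ∧ x < qS a) → (pS b ≤ x ∧ x < qS b) → False := by
      intro x h1 h2 h3 h4
      obtain ⟨c₀, -, hu⟩ := C2 x h1 h2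
      have e1 : colS a = c₀ := hu _
        ⟨pS a, qS a, ⟨⟨a, halt a ha⟩, hYmem a ha, hswS a ha⟩, h3.1, h3.2⟩
      have e2 : colS b = c₀ := hu _
        ⟨pS b, qS b, ⟨⟨b, halt b hb⟩, hYmem b hb, hswS b hb⟩, h4.1, h4.2⟩
      have : (⟨a, halt a ha⟩ : Fin r) = ⟨b, halt b hb⟩ :=
        part_eq hY (hYmem a ha) (by rw [e1, ← e2]; exact hYmem b hb)
      have : a = b := by simpa using this
      omega
    rcases le_total (pS a) (pS b) with hle | hle
    · exact hface (pS b) (by omega) (by omega) (by omega) (by omega)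
    · exact hface (pS a) (by omega) (by omega) (by omega) (by omega)
  have hcover : ∀ x, 1 ≤ x → x + 1 ≤ r → ∃ a, a ∈ S ∧ pS a ≤ x ∧ x < qS a := by
    intro x h1 h2
    obtain ⟨c₀, hc₀, -⟩ := C2 x h1 h2
    obtain ⟨p', q', ⟨a', hca', hsw'⟩, hx3, hx4⟩ := hc₀
    obtain ⟨haS, hec, hep, heq⟩ := hident c₀ a' p' q' hca' hsw'
    exact ⟨a'.1, haS, by omega, by omega⟩
  have hSne : S.Nonempty := by
    obtain ⟨a, ha, -, -⟩ := hcover 1 le_rfl (by omega)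
    exact ⟨a, ha⟩
  have hcard : S.card ≤ r - 1 := by
    have hsub : S ⊆ Finset.Icc 1 (r - 1) := by
      intro a ha
      have h1 := (hswS a ha).1; have h2 := (hswS a ha).2.1
      have h3 := (hswS a ha).2.2.1; have h4 := (hswS a ha).2.2.2.1
      exact Finset.mem_Icc.2 (by omega)
    calc S.card ≤ (Finset.Icc 1 (r - 1)).card := Finset.card_le_card hsub
    _ = r - 1 := by rw [Nat.card_Icc]; omega
  refine ⟨S.card, Finset.card_pos.2 hSne, hcard, ?_⟩
  set t := S.card with htdef
  have ht1 : 1 ≤ t := Finset.card_pos.2 hSne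
  set iseq : Fin t → ℕ := fun u => S.orderEmbOfFin rfl u with hiseq
  have hiS : ∀ u, iseq u ∈ S := fun u => Finset.orderEmbOfFin_mem S rfl u
  have hmono : StrictMono iseq := (S.orderEmbOfFin rfl).strictMono
  have hsurj : ∀ a ∈ S, ∃ u, iseq u = a := by
    intro a ha
    have h1 := Finset.range_orderEmbOfFin S rfl
    have h2 : a ∈ Set.range (S.orderEmbOfFin rfl) := by rw [h1]; exact ha
    exact h2
  have hbnds : ∀ u : Fin t, 1 ≤ pS (iseq u) ∧ pS (iseq u) ≤ iseq u ∧
      iseq u < qS (iseq u) ∧ qS (iseq u) ≤ r := by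
    intro u
    have h := hswS _ (hiS u)
    exact ⟨h.1, h.2.1, h.2.2.1, h.2.2.2.1⟩
  -- the minimal swap part has hole 1
  have hmin : pS (iseq ⟨0, ht1⟩) = 1 := by
    obtain ⟨a, ha, hpa, hqa⟩ := hcover 1 le_rfl (by omega)
    have hp1 : pS a = 1 := by have := (hswS a ha).1; omega
    have hia : iseq ⟨0, ht1⟩ ≤ a := by
      obtain ⟨u, hu⟩ := hsurj a ha
      rw [← hu]
      exact hmono.monotone (by simp only [Fin.le_def]; omega)
    rcases eq_or_lt_of_le hia with heq | hlt
    · rw [heq]; exact hp1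
    · exfalso
      have := hord _ (hiS ⟨0, ht1⟩) a ha hlt
      have hb := hbnds ⟨0, ht1⟩
      omega
  -- the maximal swap part has bead r
  have hmax : qS (iseq ⟨t - 1, by omega⟩) = r := by
    set um : Fin t := ⟨t - 1, by omega⟩
    have hb := hbnds um
    by_contra hne
    obtain ⟨b, hbS, hpb, hqb⟩ := hcover (qS (iseq um)) (by omega) (by omega)
    obtain ⟨u', hu'⟩ := hsurj b hbS
    subst hu'
    rcases lt_trichotomy (iseq u') (iseq um) with hlt | heq | hlt
    · have := hord _ (hiS u') _ (hiS um) hlt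
      have hb' := hbnds u'
      omega
    · rw [heq] at hqb; omega
    · have : um < u' := hmono.lt_iff_lt.1 hlt
      have : u'.1 ≤ t - 1 := by have := u'.2; omega
      have : ¬ (um < u') := by
        simp only [not_lt, Fin.le_def]
        omega
      omega
  -- adjacency of consecutive intervals
  have hadj : ∀ (u v : Fin t), u.1 + 1 = v.1 → qS (iseq u) = pS (iseq v) := by
    intro u v huv
    have hbu := hbnds u
    have hbv := hbnds v
    have hless : iseq u < iseq v := hmono (by simp only [Fin.lt_def]; omega)
    have hqlt : qS (iseq u) ≤ pS (iseq v) := hord _ (hiS u) _ (hiS v) hless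
    obtain ⟨b, hbS, hpb, hqb⟩ := hcover (qS (iseq u)) (by omega) (by omega)
    obtain ⟨u', hu'⟩ := hsurj b hbS
    subst hu'
    have hbu' := hbnds u'
    rcases lt_trichotomy (iseq u') (iseq u) with hlt | heq | hlt
    · exfalso
      have := hord _ (hiS u') _ (hiS u) hlt
      omega
    · exfalso; rw [heq] at hqb; omega
    · have huu' : u < u' := hmono.lt_iff_lt.1 hlt
      have hvu' : v ≤ u' := by simp only [Fin.le_def]; have := huu'; simp only [Fin.lt_def] at this; omega
      rcases eq_or_lt_of_le hvu' with heq | hlt2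
      · rw [← heq] at hpb
        omega
      · exfalso
        have hless2 : iseq v < iseq u' := hmono hlt2
        have := hord _ (hiS v) _ (hiS u') hless2
        omega
  -- define jseq and w
  set jseq : Fin (t + 1) → ℕ :=
    fun v => if h : v.1 < t then pS (iseq ⟨v.1, h⟩) else r with hjseq
  set wfun : Fin t → ℕ :=
    fun u => List.idxOf (colS (iseq u)) ((Yat r Y (iseq u)).sort (· ≤ ·)) + 1 with hwfun
  have hYatS : ∀ a (ha : a ∈ S), Yat r Y a = Y ⟨a, halt a ha⟩ := fun a ha => dif_pos _
  have hmemsort : ∀ u : Fin t, colS (iseq u) ∈ ((Yat r Y (iseq u)).sort (· ≤ ·)) := by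
    intro u
    rw [Finset.mem_sort, hYatS _ (hiS u)]
    exact hYmem _ (hiS u)
  have hidxlt : ∀ u : Fin t,
      List.idxOf (colS (iseq u)) ((Yat r Y (iseq u)).sort (· ≤ ·)) <
        ((Yat r Y (iseq u)).sort (· ≤ ·)).length :=
    fun u => List.idxOf_lt_length_iff.2 (hmemsort u)
  have hgetw : ∀ u : Fin t,
      ((Yat r Y (iseq u)).sort (· ≤ ·))[wfun u - 1]? = some (colS (iseq u)) := by
    intro u
    have h1 : wfun u - 1 = List.idxOf (colS (iseq u)) ((Yat r Y (iseq u)).sort (· ≤ ·)) := by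
      simp only [hwfun]
      omega
    rw [h1, List.getElem?_eq_getElem (hidxlt u)]
    simp [List.idxOf_get, List.getElem_idxOf]
  have hjc : ∀ u : Fin t, jseq u.castSucc = pS (iseq u) := by
    intro u
    have h : (u.castSucc : Fin (t+1)).1 < t := by simp [Fin.coe_castSucc]
    simp only [hjseq]
    rw [dif_pos h]
    congr 1
  have hjs : ∀ u : Fin t, jseq u.succ = qS (iseq u) := by
    intro u
    by_cases h : u.1 + 1 < t
    · have h2 : (u.succ : Fin (t+1)).1 < t := by simpa using h
      simp only [hjseq]
      rw [dif_pos h2]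
      exact (hadj u ⟨u.1 + 1, h⟩ rfl).symm
    · have h2 : ¬ ((u.succ : Fin (t+1)).1 < t) := by simpa using h
      simp only [hjseq]
      rw [dif_neg h2]
      have hu : u = ⟨t - 1, by omega⟩ := Fin.ext (by have := u.2; simp only; omega)
      rw [hu]
      exact hmax.symm
  refine ⟨iseq, jseq, wfun, ⟨?_, ?_, ?_, ?_, ?_⟩, ?_, ?_⟩
  · -- jseq 0 = 1
    have h0 : ((0 : Fin (t+1)) : ℕ) < t := by simp [ht1]; omega
    simp only [hjseq]
    rw [dif_pos h0]
    convert hmin using 3 <;> simp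
  · -- jseq last = r
    simp only [hjseq]
    rw [dif_neg (by simp)]
  · -- hole ≤ level
    intro m
    rw [hjc m]
    exact (hbnds m).2.1
  · -- level < next hole
    intro m
    rw [hjs m]
    exact (hbnds m).2.2.1
  · -- nonempty parts
    intro m
    show 1 ≤ (Yat r Y (iseq m)).card
    rw [hYatS _ (hiS m)]
    exact Finset.card_pos.2 ⟨colS (iseq m), hYmem _ (hiS m)⟩
  · -- bounds on w
    intro u
    constructor
    · simp [hwfun]
    · have h1 := hidxlt u
      rw [Finset.length_sort] at h1
      simp only [hwfun]
      omega
  · -- D = DeltaM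
    funext s c
    by_cases hc : ∃ u, colS (iseq u) = c
    · obtain ⟨u, hu⟩ := hc
      have hex : ∃ u', ((Yat r Y (iseq u')).sort (· ≤ ·))[wfun u' - 1]? = some c :=
        ⟨u, by rw [hgetw u, hu]⟩
      simp only [DeltaM]
      rw [dif_pos hex]
      have hchs := Classical.choose_spec hex
      rw [hgetw (Classical.choose hex)] at hchs
      have hcol_eq : colS (iseq (Classical.choose hex)) = colS (iseq u) := by
        rw [hu]; exact Option.some_injective _ hchs
      have huu : Classical.choose hex = u := by
        have hpe : (⟨iseq (Classical.choose hex), halt _ (hiS _)⟩ : Fin r) =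
            ⟨iseq u, halt _ (hiS u)⟩ :=
          part_eq hY (hYmem _ (hiS (Classical.choose hex)))
            (by rw [hcol_eq]; exact hYmem _ (hiS u))
        have : iseq (Classical.choose hex) = iseq u := by simpa using hpe
        exact hmono.injective this
      rw [huu]
      have hD : D s c = decide ((s.1 + 1 ≤ iseq u ∧ s.1 + 1 ≠ pS (iseq u)) ∨
          s.1 + 1 = qS (iseq u)) := by
        rw [← hu]
        exact (hswS _ (hiS u)).2.2.2.2 s
      rw [hD]
      have hbu := hbnds u
      unfold cvec
      rw [hjc u, hjs u]
      split_ifs with h1 h2 <;> rw [decide_eq_decide] <;> omega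
    · have hnex : ¬ ∃ u', ((Yat r Y (iseq u')).sort (· ≤ ·))[wfun u' - 1]? = some c := by
        rintro ⟨u', hu'⟩
        rw [hgetw u'] at hu'
        exact hc ⟨u', Option.some_injective _ hu'⟩
      simp only [DeltaM]
      rw [dif_neg hnex]
      obtain ⟨a₀, ha₀⟩ := hY.2.1 c
      have h2 : ∃ a, c ∈ Y a := ⟨a₀, ha₀⟩
      rw [dif_pos h2, part_eq hY (Classical.choose_spec h2) ha₀]
      rcases C1 c a₀ ha₀ with hInt | ⟨p, q, hsw⟩
      · exact hInt s
      · exfalso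
        obtain ⟨haS, hec, -, -⟩ := hident c a₀ p q ha₀ hsw
        obtain ⟨u, hu⟩ := hsurj a₀.1 haS
        exact hc ⟨u, by rw [hu, hec]⟩

end BS6
section BS7

variable {e r : ℕ}

lemma mem_nset_iff (he : 2 ≤ e) (hr : 2 ≤ r) {Y : Fin r → Finset (Fin e)}
    (hY : LambdaMem r Y) (π : Equiv.Perm (Fin r)) (M : Fin r → Fin e → Bool) :
    M ∈ Nset r Y π ↔ CharY Y (fun s c => M (π.symm s) c) := by
  constructor
  · rintro ⟨t, ht1, ht2, iseq, jseq, w, hcond, hw, hM⟩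
    have hEq : (fun s c => M (π.symm s) c) = DeltaM r Y iseq jseq w := by
      funext s c
      rw [hM]
      simp [Equiv.apply_symm_apply]
    rw [hEq]
    exact charY_of_delta hr hY ht1 hcond hw
  · intro hch
    obtain ⟨t, ht1, ht2, iseq, jseq, w, hcond, hw, hDe⟩ := delta_of_charY hr hY hch
    refine ⟨t, ht1, ht2, iseq, jseq, w, hcond, hw, ?_⟩
    funext s c
    have h1 : M s c = M (π.symm (π s)) c := by rw [Equiv.symm_apply_apply]
    rw [h1]
    exact congrFun (congrFun hDe (π s)) c

lemma beadSwap_perm (π : Equiv.Perm (Fin r)) {M M' : Fin r → Fin e → Bool}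
    (h : BeadSwap M M') :
    BeadSwap (fun s c => M (π.symm s) c) (fun s c => M' (π.symm s) c) := by
  obtain ⟨i, j, hij, s, t, hst, m1, m2, m3, m4, n1, n2, n3, n4, hoth⟩ := h
  refine ⟨i, j, hij, π s, π t, fun h => hst (π.injective h), ?_, ?_, ?_, ?_, ?_, ?_, ?_, ?_, ?_⟩
  · show M (π.symm (π s)) i = true; rw [Equiv.symm_apply_apply]; exact m1
  · show M (π.symm (π t)) j = true; rw [Equiv.symm_apply_apply]; exact m2
  · show M (π.symm (π s)) j = false; rw [Equiv.symm_apply_apply]; exact m3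
  · show M (π.symm (π t)) i = false; rw [Equiv.symm_apply_apply]; exact m4
  · show M' (π.symm (π s)) i = false; rw [Equiv.symm_apply_apply]; exact n1
  · show M' (π.symm (π t)) j = false; rw [Equiv.symm_apply_apply]; exact n2
  · show M' (π.symm (π s)) j = true; rw [Equiv.symm_apply_apply]; exact n3
  · show M' (π.symm (π t)) i = true; rw [Equiv.symm_apply_apply]; exact n4
  · intro s' i' hc
    show M' (π.symm s') i' = M (π.symm s') i'
    apply hoth
    rcases hc with ⟨h1, h2⟩ | h
    · refine Or.inl ⟨?_, ?_⟩
      · intro hh; exact h1 (by rw [← hh, Equiv.apply_symm_apply])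
      · intro hh; exact h2 (by rw [← hh, Equiv.apply_symm_apply])
    · exact Or.inr h

end BS7
/-- `𝔑(Y,π)` is closed under bead-swap equivalence. -/
theorem Nset_closed_under_beadSwap (e r : ℕ) (he : 2 ≤ e) (hr : 2 ≤ r)
    (Y : Fin r → Finset (Fin e)) (hY : LambdaMem r Y)
    (π : Equiv.Perm (Fin r))
    (M : Fin r → Fin e → Bool) (hM : M ∈ Nset r Y π)
    (L : Fin r → Fin e → Bool) (hL : Relation.EqvGen BeadSwap M L) :
    L ∈ Nset r Y π := by
  have main : ∀ A B : Fin r → Fin e → Bool, Relation.EqvGen BeadSwap A B →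
      (CharY Y (fun s c => A (π.symm s) c) ↔ CharY Y (fun s c => B (π.symm s) c)) := by
    intro A B h
    induction h with
    | rel A B hAB =>
        exact ⟨charY_beadSwap hY (beadSwap_perm π hAB),
          charY_beadSwap hY (beadSwap_perm π (beadSwap_symm hAB))⟩
    | refl A => exact Iff.rfl
    | symm A B h ih => exact ih.symm
    | trans A B C h1 h2 ih1 ih2 => exact ih1.trans ih2
  exact (mem_nset_iff he hr hY π L).2 ((main M L hL).1 ((mem_nset_iff he hr hY π M).1 hM))


end
end AK
end

section
/- Let e ≥ 2, r ≥ 1, let L ∈ M(r,e), let m ≥ 0, i_1,…,i_m ∈ {1,…,e−1} and k_1,…,k_m > 0, and suppose that in the free ℤ[v,v^{−1}]-module with basis M(r,e) one has G^{(k_m)}_{i_m} ⋯ G^{(k_1)}_{i_1}[L] = Σ_{M ∈ M(r,e)} a_M(v) [M] with a_M(v) ∈ ℕ[v,v^{−1}]. Fix a position 0 ≤ p ≤ e and let c be either the all-zeros or the all-ones column of length r; for K ∈ M(r,e) let K̄ ∈ M(r,e+1) be the matrix obtained by inserting the column c into K at position p. Then there exist m̄ ≥ 0, indices ī_1,…,ī_{m̄}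 ∈ {1,…,e} and integers k̄_1,…,k̄_{m̄} > 0 such that G^{(k̄_{m̄})}_{ī_{m̄}} ⋯ G^{(k̄_1)}_{ī_1}[L̄] = Σ_{M ∈ M(r,e)} a_M(v) [M̄]. -/
open scoped Classical

namespace AK
noncomputable section



/-! ### The operators `G^{(k)}_i` on the free `ℤ[v,v⁻¹]`-module with basis `M(r,e)` -/

/-- The column `i - 1`. -/
def colPred {e : ℕ} (i : Fin e) : Fin e :=
  ⟨i.1 - 1, Nat.lt_of_le_of_lt (Nat.sub_le _ _) i.isLt⟩

/-- `L →(i,k) M`: move `k` ones from column `i-1` to column `i`. -/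
def GArrow {e r : ℕ} (i : Fin e) (k : ℕ) (L M : Fin r → Fin e → Bool) : Prop :=
  ∃ S : Finset (Fin r), S.card = k ∧
    (∀ s ∈ S, L s (colPred i) = true ∧ L s i = false) ∧
    M = fun s c => if s ∈ S ∧ (c = colPred i ∨ c = i) then !(L s c) else L s c

/-- `N_i(L,M)` for `L →(i,k) M`. -/
def Nval {e r : ℕ} (i : Fin e) (L M : Fin r → Fin e → Bool) : ℤ :=
  ∑ a ∈ Finset.univ.filter (fun a : Fin r => ¬(L a i = M a i)),
    (((Finset.univ.filter
        (fun s : Fin r => a < s ∧ M s (colPred i) = true ∧ M s i = false)).card : ℤ)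
      - ((Finset.univ.filter
        (fun s : Fin r => a < s ∧ L s (colPred i) = false ∧ L s i = true)).card : ℤ))

/-- The free `ℤ[v,v⁻¹]`-module on the set of `r × e` matrices. -/
abbrev FM (r e : ℕ) := (Fin r → Fin e → Bool) →₀ LaurentPolynomial ℤ

/-- The operator `G^{(k)}_i`. -/
def Gop {e r : ℕ} (i : Fin e) (k : ℕ) (f : FM r e) : FM r e :=
  f.sum fun L c =>
    ∑ M ∈ Finset.univ.filter (fun M => GArrow i k L M),
      Finsupp.single M (c * LaurentPolynomial.T (Nval i L M))

/-- `G^{(k_m)}_{i_m} ⋯ G^{(k_1)}_{i_1}`, applied in order of the list. -/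
def GopList {e r : ℕ} (ops : List (Fin e × ℕ)) (f : FM r e) : FM r e :=
  ops.foldl (fun g p => Gop p.1 p.2 g) f

/-- Membership in `ℕ[v, v⁻¹]` (nonnegative Laurent polynomials). -/
def IsNNLaurent (a : LaurentPolynomial ℤ) : Prop :=
  ∃ f : ℤ →₀ ℕ, a = f.sum fun n c => (c : LaurentPolynomial ℤ) * LaurentPolynomial.T n

/-- Membership in `v·ℕ[v]`. -/
def IsVNPoly (a : LaurentPolynomial ℤ) : Prop :=
  ∃ f : ℤ →₀ ℕ, (∀ n ∈ f.support, 1 ≤ n) ∧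
    a = f.sum fun n c => (c : LaurentPolynomial ℤ) * LaurentPolynomial.T n

/-- Insert a constant column `b` into `K` at position `p`. -/
def insertCol {e r : ℕ} (p : ℕ) (b : Bool) (K : Fin r → Fin e → Bool) :
    Fin r → Fin (e + 1) → Bool :=
  fun s c =>
    if c.1 < p then (if h2 : c.1 < e then K s ⟨c.1, h2⟩ else false)
    else if c.1 = p then b
    else if h3 : c.1 - 1 < e then K s ⟨c.1 - 1, h3⟩ else false

section Aux
variable {e r : ℕ}


/-- Index embedding for insertion of a column at position `p`. -/
def emb (p : ℕ) (j : Fin e) : Fin (e + 1) :=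
  ⟨if j.1 < p then j.1 else j.1 + 1, by split <;> omega⟩

lemma emb_injective (p : ℕ) : Function.Injective (emb (e := e) p) := by
  intro j j' h
  apply Fin.ext
  simp only [emb, Fin.mk.injEq] at h
  split at h <;> split at h <;> omega

lemma emb_val_ne_p (p : ℕ) (j : Fin e) : (emb p j).1 ≠ p := by
  simp only [emb]; split <;> omega

lemma insertCol_emb (p : ℕ) (b : Bool) (K : Fin r → Fin e → Bool) (s : Fin r) (j : Fin e) :
    insertCol p b K s (emb p j) = K s j := by
  simp only [insertCol, emb]
  by_cases h : j.1 < p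
  · simp [h, j.isLt]
  · have : ¬ (j.1 + 1 < p) := by omega
    have h2 : ¬ (j.1 + 1 = p) := by omega
    simp [h, this, h2, j.isLt]

lemma insertCol_at_p (p : ℕ) (b : Bool) (K : Fin r → Fin e → Bool) (s : Fin r)
    (c : Fin (e + 1)) (hc : c.1 = p) : insertCol p b K s c = b := by
  simp [insertCol, hc]

lemma insertCol_injective (p : ℕ) (b : Bool) :
    Function.Injective (insertCol (e := e) (r := r) p b) := by
  intro K K' h
  funext s j
  have := congrFun (congrFun h s) (emb p j)
  rwa [insertCol_emb, insertCol_emb] at this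

lemma col_cases (p : ℕ) (hp : p ≤ e) (c : Fin (e + 1)) :
    c.1 = p ∨ ∃ j : Fin e, c = emb p j := by
  by_cases h : c.1 = p
  · exact Or.inl h
  · right
    by_cases h2 : c.1 < p
    · exact ⟨⟨c.1, by omega⟩, by apply Fin.ext; simp [emb, h2]⟩
    · refine ⟨⟨c.1 - 1, by omega⟩, ?_⟩
      apply Fin.ext
      have : ¬ (c.1 - 1 < p) := by omega
      simp [emb, this]
      omega



/-- The eligible rows for the operator at column `i`. -/
def elig (i : Fin e) (L : Fin r → Fin e → Bool) : Finset (Fin r) :=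
  Finset.univ.filter fun s => L s (colPred i) = true ∧ L s i = false

/-- Flip the entries of rows in `S` at columns `colPred i` and `i`. -/
def flipM (i : Fin e) (S : Finset (Fin r)) (L : Fin r → Fin e → Bool) :
    Fin r → Fin e → Bool :=
  fun s c => if s ∈ S ∧ (c = colPred i ∨ c = i) then !(L s c) else L s c

lemma flipM_apply_i (i : Fin e) (S : Finset (Fin r)) (L : Fin r → Fin e → Bool) (s : Fin r) :
    flipM i S L s i = if s ∈ S then !(L s i) else L s i := by
  simp [flipM]

lemma garrow_iff (i : Fin e) (k : ℕ) (L M : Fin r → Fin e → Bool) :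
    GArrow i k L M ↔ ∃ S ∈ (elig i L).powersetCard k, M = flipM i S L := by
  constructor
  · rintro ⟨S, hcard, helig, rfl⟩
    refine ⟨S, ?_, rfl⟩
    rw [Finset.mem_powersetCard]
    exact ⟨fun s hs => by simp [elig, helig s hs], hcard⟩
  · rintro ⟨S, hS, rfl⟩
    rw [Finset.mem_powersetCard] at hS
    exact ⟨S, hS.2, fun s hs => by have := hS.1 hs; simpa [elig] using this, rfl⟩

lemma flipM_injOn (i : Fin e) (k : ℕ) (L : Fin r → Fin e → Bool) :
    Set.InjOn (fun S => flipM i S L) ((elig i L).powersetCard k) := by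
  intro S hS S' hS' h
  rw [Finset.mem_coe, Finset.mem_powersetCard] at hS hS'
  ext s
  have h1 := congrFun (congrFun h s) i
  simp only [flipM_apply_i] at h1
  constructor
  · intro hs
    by_contra hs'
    have hL : L s i = false := by have := hS.1 hs; simp [elig] at this; exact this.2
    simp [hs, hs', hL] at h1
  · intro hs
    by_contra hs'
    have hL : L s i = false := by have := hS'.1 hs; simp [elig] at this; exact this.2
    simp [hs, hs', hL] at h1

lemma Gop_single (i : Fin e) (k : ℕ) (L : Fin r → Fin e → Bool) (c : LaurentPolynomial ℤ) :
    Gop i k (Finsupp.single L c)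
      = ∑ S ∈ (elig i L).powersetCard k,
          Finsupp.single (flipM i S L)
            (c * LaurentPolynomial.T (Nval i L (flipM i S L))) := by
  unfold Gop
  rw [Finsupp.sum_single_index (by simp)]
  have himg : Finset.univ.filter (fun M => GArrow i k L M)
      = ((elig i L).powersetCard k).image (fun S => flipM i S L) := by
    ext M
    simp only [Finset.mem_filter, Finset.mem_univ, true_and, Finset.mem_image, garrow_iff]
    constructor
    · rintro ⟨S, hS, rfl⟩; exact ⟨S, hS, rfl⟩
    · rintro ⟨S, hS, rfl⟩; exact ⟨S, hS, rfl⟩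
  rw [himg, Finset.sum_image (flipM_injOn i k L)]

lemma Gop_add (i : Fin e) (k : ℕ) (f g : FM r e) :
    Gop i k (f + g) = Gop i k f + Gop i k g := by
  unfold Gop
  apply Finsupp.sum_add_index (by simp)
  intro L _ c1 c2
  simp [add_mul, Finset.sum_add_distrib]

lemma Gop_zero (i : Fin e) (k : ℕ) : Gop i k (0 : FM r e) = 0 := by
  simp [Gop]

/-- `Gop` as an additive monoid hom. -/
def gopHom (i : Fin e) (k : ℕ) : FM r e →+ FM r e :=
  AddMonoidHom.mk' (Gop i k) (Gop_add i k)

lemma Nval_flip_index (i : Fin e) (L : Fin r → Fin e → Bool) (S : Finset (Fin r))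
    (hS : S ⊆ elig i L) :
    Finset.univ.filter (fun a : Fin r => ¬(L a i = flipM i S L a i)) = S := by
  ext a
  simp only [Finset.mem_filter, Finset.mem_univ, true_and, flipM_apply_i]
  by_cases ha : a ∈ S
  · have hL : L a i = false := by have := hS ha; simp [elig] at this; exact this.2
    simp [ha, hL]
  · simp [ha]

lemma Nval_flip_formula (i : Fin e) (L : Fin r → Fin e → Bool) (S : Finset (Fin r))
    (hS : S ⊆ elig i L) :
    Nval i L (flipM i S L) = ∑ a ∈ S,
      (((Finset.univ.filter (fun s : Fin r =>
          a < s ∧ s ∉ S ∧ L s (colPred i) = true ∧ L s i = false)).card : ℤ)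
        - ((Finset.univ.filter (fun s : Fin r =>
          a < s ∧ s ∉ S ∧ L s (colPred i) = false ∧ L s i = true)).card : ℤ)) := by
  unfold Nval
  rw [Nval_flip_index i L S hS]
  apply Finset.sum_congr rfl
  intro a _
  have h1 : Finset.univ.filter (fun s : Fin r =>
        a < s ∧ flipM i S L s (colPred i) = true ∧ flipM i S L s i = false)
      = Finset.univ.filter (fun s : Fin r =>
        a < s ∧ s ∉ S ∧ L s (colPred i) = true ∧ L s i = false) := by
    ext s
    simp only [Finset.mem_filter, Finset.mem_univ, true_and]
    by_cases hs : s ∈ S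
    · have hL : L s (colPred i) = true ∧ L s i = false := by
        have := hS hs; simpa [elig] using this
      simp [flipM, hs, hL.1]
    · simp [flipM, hs]
  have h2 : Finset.univ.filter (fun s : Fin r =>
        a < s ∧ L s (colPred i) = false ∧ L s i = true)
      = Finset.univ.filter (fun s : Fin r =>
        a < s ∧ s ∉ S ∧ L s (colPred i) = false ∧ L s i = true) := by
    ext s
    simp only [Finset.mem_filter, Finset.mem_univ, true_and]
    by_cases hs : s ∈ S
    · have hL : L s (colPred i) = true := by
        have := hS hs; simp [elig] at this; exact this.1
      simp [hs, hL]
    · simp [hs]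
  rw [h1, h2]

/-- Splitting counts. -/
lemma card_sub_split (Q f g : Fin r → Prop) :
    ((Finset.univ.filter fun s => Q s ∧ f s).card : ℤ)
      - ((Finset.univ.filter fun s => Q s ∧ g s).card : ℤ)
    = ((Finset.univ.filter fun s => Q s ∧ f s ∧ ¬ g s).card : ℤ)
      - ((Finset.univ.filter fun s => Q s ∧ ¬ f s ∧ g s).card : ℤ) := by
  simp only [Finset.card_filter]
  push_cast
  rw [← Finset.sum_sub_distrib, ← Finset.sum_sub_distrib]
  apply Finset.sum_congr rfl
  intro s _
  by_cases hQ : Q s <;> by_cases hf : f s <;> by_cases hg : g s <;> simp [hQ, hf, hg]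


/-! ### Transport along `insertCol` for operators away from the inserted column -/

lemma elig_insertCol (p : ℕ) (b : Bool) (L : Fin r → Fin e → Bool)
    (i : Fin e) (i' : Fin (e + 1)) (hii' : i' = emb p i)
    (hcp : colPred i' = emb p (colPred i)) :
    elig i' (insertCol p b L) = elig i L := by
  ext s
  simp only [elig, hcp]
  simp [hii', insertCol_emb]

lemma flipM_insertCol (p : ℕ) (hp : p ≤ e) (b : Bool) (L : Fin r → Fin e → Bool)
    (S : Finset (Fin r)) (i : Fin e) (i' : Fin (e + 1)) (hii' : i' = emb p i)
    (hcp : colPred i' = emb p (colPred i)) :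
    flipM i' S (insertCol p b L) = insertCol p b (flipM i S L) := by
  funext s c
  rcases col_cases p hp c with hc | ⟨j, rfl⟩
  · have h1 : c ≠ colPred i' := by
      rw [hcp]; intro h; exact emb_val_ne_p p (colPred i) (by rw [← h, hc])
    have h2 : c ≠ i' := by
      rw [hii']; intro h; exact emb_val_ne_p p i (by rw [← h, hc])
    rw [insertCol_at_p p b _ s c hc]
    simp [flipM, h1, h2, insertCol_at_p p b L s c hc]
  · simp only [flipM, hcp]
    simp only [hii', insertCol_emb, (emb_injective p).eq_iff]
    rfl

lemma Nval_insertCol (p : ℕ) (b : Bool) (L M : Fin r → Fin e → Bool)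
    (i : Fin e) (i' : Fin (e + 1)) (hii' : i' = emb p i)
    (hcp : colPred i' = emb p (colPred i)) :
    Nval i' (insertCol p b L) (insertCol p b M) = Nval i L M := by
  unfold Nval
  have hidx : Finset.univ.filter
      (fun a : Fin r => ¬(insertCol p b L a i' = insertCol p b M a i'))
      = Finset.univ.filter (fun a : Fin r => ¬(L a i = M a i)) := by
    ext a; simp [hii', insertCol_emb]

  rw [hidx]
  apply Finset.sum_congr rfl
  intro a _
  have h1 : Finset.univ.filter (fun s : Fin r =>
        a < s ∧ insertCol p b M s (colPred i') = true ∧ insertCol p b M s i' = false)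
      = Finset.univ.filter (fun s : Fin r =>
        a < s ∧ M s (colPred i) = true ∧ M s i = false) := by
    ext s; simp only [hcp]; simp [hii', insertCol_emb]
  have h2 : Finset.univ.filter (fun s : Fin r =>
        a < s ∧ insertCol p b L s (colPred i') = false ∧ insertCol p b L s i' = true)
      = Finset.univ.filter (fun s : Fin r =>
        a < s ∧ L s (colPred i) = false ∧ L s i = true) := by
    ext s; simp only [hcp]; simp [hii', insertCol_emb]
  rw [h1, h2]

lemma step_single_ne (p : ℕ) (hp : p ≤ e) (b : Bool)
    (i : Fin e) (i' : Fin (e + 1)) (hii' : i' = emb p i)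
    (hcp : colPred i' = emb p (colPred i)) (k : ℕ)
    (L : Fin r → Fin e → Bool) (c : LaurentPolynomial ℤ) :
    Gop i' k (Finsupp.single (insertCol p b L) c)
      = Finsupp.mapDomain (insertCol p b) (Gop i k (Finsupp.single L c)) := by
  rw [Gop_single, Gop_single, elig_insertCol p b L i i' hii' hcp,
    Finsupp.mapDomain_finset_sum]
  apply Finset.sum_congr rfl
  intro S hS
  rw [Finsupp.mapDomain_single, flipM_insertCol p hp b L S i i' hii' hcp,
    Nval_insertCol p b L (flipM i S L) i i' hii' hcp]

/-! ### The two-step simulation at the inserted column, `b = false` -/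

lemma step_single_eq_false (p : ℕ) (hp : p ≤ e) (i : Fin e) (hi0 : i.1 ≠ 0) (hip : i.1 = p)
    (j1 j2 : Fin (e + 1)) (hj1 : j1.1 = p) (hj2v : j2.1 = p + 1) (k : ℕ)
    (L : Fin r → Fin e → Bool) (c : LaurentPolynomial ℤ) :
    Gop j2 k (Gop j1 k (Finsupp.single (insertCol p false L) c))
      = Finsupp.mapDomain (insertCol p false) (Gop i k (Finsupp.single L c)) := by
  have hpe : p < e := hip ▸ i.isLt
  have hp1 : 1 ≤ p := by omega
  -- column identities
  have hcpi : (colPred i).1 = p - 1 := by simp [colPred, hip]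
  have hcpj1 : colPred j1 = emb p (colPred i) := by
    apply Fin.ext
    show j1.1 - 1 = (if (colPred i).1 < p then (colPred i).1 else (colPred i).1 + 1)
    rw [if_pos (by omega), hcpi, hj1]
  have hcpj2 : colPred j2 = j1 := by
    apply Fin.ext
    show j2.1 - 1 = j1.1
    omega
  have hj2e : j2 = emb p i := by
    apply Fin.ext
    show j2.1 = (if i.1 < p then i.1 else i.1 + 1)
    rw [if_neg (by omega)]
    omega
  have hcpi_ne_i : colPred i ≠ i := by
    intro h
    have := congrArg Fin.val h
    simp [colPred] at this
    omega
  have hne_emb_j1 : ∀ j : Fin e, emb p j ≠ j1 := by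
    intro j h
    exact emb_val_ne_p p j (by rw [h, hj1])
  have hne_j2_cpj1 : j2 ≠ colPred j1 := by
    intro h
    have := congrArg Fin.val h
    rw [hj2v] at this
    simp [colPred, hj1] at this
    omega
  have hne_j2_j1 : j2 ≠ j1 := by
    intro h
    have := congrArg Fin.val h
    omega
  -- values of the inserted matrices
  have hval1 : ∀ (K : Fin r → Fin e → Bool) (s : Fin r),
      insertCol p false K s j1 = false := fun K s => insertCol_at_p p false K s j1 hj1
  have hvalcp : ∀ (K : Fin r → Fin e → Bool) (s : Fin r),
      insertCol p false K s (colPred j1) = K s (colPred i) := fun K s => by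
    rw [hcpj1, insertCol_emb]
  have hval2 : ∀ (K : Fin r → Fin e → Bool) (s : Fin r),
      insertCol p false K s j2 = K s i := fun K s => by rw [hj2e, insertCol_emb]
  -- expand the first operator and the right-hand side
  rw [Gop_single, show Gop j2 k = ⇑(gopHom (e := e + 1) (r := r) j2 k) from rfl, map_sum,
    Gop_single, Finsupp.mapDomain_finset_sum]
  have hsub : (elig i L).powersetCard k ⊆ (elig j1 (insertCol p false L)).powersetCard k := by
    apply Finset.powersetCard_mono
    intro s hs
    simp only [elig, Finset.mem_filter, Finset.mem_univ, true_and] at hs ⊢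
    rw [hvalcp, hval1]
    exact ⟨hs.1, rfl⟩
  have key : ∀ S ∈ (elig j1 (insertCol p false L)).powersetCard k,
      gopHom (e := e + 1) (r := r) j2 k (Finsupp.single (flipM j1 S (insertCol p false L))
          (c * LaurentPolynomial.T (Nval j1 (insertCol p false L) (flipM j1 S (insertCol p false L)))))
        = if S ∈ (elig i L).powersetCard k then
            Finsupp.mapDomain (insertCol p false) (Finsupp.single (flipM i S L)
              (c * LaurentPolynomial.T (Nval i L (flipM i S L)))) else 0 := by
    intro S hS
    obtain ⟨hSsub, hScard⟩ := Finset.mem_powersetCard.mp hS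
    have hsE1 : ∀ s ∈ S, L s (colPred i) = true := by
      intro s hs
      have := hSsub hs
      simp only [elig, Finset.mem_filter, Finset.mem_univ, true_and] at this
      rw [hvalcp] at this
      exact this.1
    -- values of the intermediate matrix
    have m1 : ∀ s, flipM j1 S (insertCol p false L) s j1 = if s ∈ S then true else false := by
      intro s
      rw [flipM_apply_i]
      by_cases h : s ∈ S <;> simp [h, hval1]
    have m2 : ∀ s, flipM j1 S (insertCol p false L) s j2 = L s i := by
      intro s
      have : flipM j1 S (insertCol p false L) s j2 = (insertCol p false L) s j2 := by
        simp [flipM, hne_j2_cpj1, hne_j2_j1]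
      rw [this, hval2]
    have mcp : ∀ s, flipM j1 S (insertCol p false L) s (colPred j1)
        = if s ∈ S then !(L s (colPred i)) else L s (colPred i) := by
      intro s
      by_cases h : s ∈ S <;> simp [flipM, h, hvalcp]
    show Gop j2 k _ = _
    rw [Gop_single]
    have hE2 : elig j2 (flipM j1 S (insertCol p false L)) = S.filter (fun s => L s i = false) := by
      ext s
      simp only [elig, Finset.mem_filter, Finset.mem_univ, true_and, hcpj2, m1, m2]
      by_cases h : s ∈ S <;> simp [h]
    by_cases hcond : S ⊆ elig i L
    · -- the surviving branch
      have hfilterS : S.filter (fun s => L s i = false) = S := by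
        apply Finset.filter_true_of_mem
        intro s hs
        have := hcond hs
        simp only [elig, Finset.mem_filter, Finset.mem_univ, true_and] at this
        exact this.2
      rw [hE2, hfilterS,
        show S.powersetCard k = {S} from by rw [← hScard, Finset.powersetCard_self],
        Finset.sum_singleton,
        if_pos (Finset.mem_powersetCard.mpr ⟨hcond, hScard⟩), Finsupp.mapDomain_single]
      have hS2 : S ⊆ elig j2 (flipM j1 S (insertCol p false L)) := by
        rw [hE2, hfilterS]
      have hexp : Nval j1 (insertCol p false L) (flipM j1 S (insertCol p false L))
          + Nval j2 (flipM j1 S (insertCol p false L)) (flipM j2 S (flipM j1 S (insertCol p false L)))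
          = Nval i L (flipM i S L) := by
        rw [Nval_flip_formula j1 (insertCol p false L) S hSsub, Nval_flip_formula j2 _ S hS2,
          Nval_flip_formula i L S hcond, ← Finset.sum_add_distrib]
        apply Finset.sum_congr rfl
        intro a _
        have f1 : Finset.univ.filter (fun s : Fin r =>
              a < s ∧ s ∉ S ∧ (insertCol p false L) s (colPred j1) = true ∧ (insertCol p false L) s j1 = false)
            = Finset.univ.filter (fun s : Fin r =>
              (a < s ∧ s ∉ S) ∧ L s (colPred i) = true) := by
          ext s
          simp only [Finset.mem_filter, Finset.mem_univ, true_and, hvalcp, hval1]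
          tauto
        have f2 : Finset.univ.filter (fun s : Fin r =>
              a < s ∧ s ∉ S ∧ (insertCol p false L) s (colPred j1) = false ∧ (insertCol p false L) s j1 = true)
            = (∅ : Finset (Fin r)) := by
          ext s
          simp [hval1]
        have f3 : Finset.univ.filter (fun s : Fin r =>
              a < s ∧ s ∉ S ∧ flipM j1 S (insertCol p false L) s (colPred j2) = true
                ∧ flipM j1 S (insertCol p false L) s j2 = false)
            = (∅ : Finset (Fin r)) := by
          ext s
          simp only [Finset.mem_filter, Finset.mem_univ, true_and, hcpj2, m1, m2,
            Finset.notMem_empty, iff_false]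
          rintro ⟨-, hs, h1, -⟩
          simp [hs] at h1
        have f4 : Finset.univ.filter (fun s : Fin r =>
              a < s ∧ s ∉ S ∧ flipM j1 S (insertCol p false L) s (colPred j2) = false
                ∧ flipM j1 S (insertCol p false L) s j2 = true)
            = Finset.univ.filter (fun s : Fin r =>
              (a < s ∧ s ∉ S) ∧ L s i = true) := by
          ext s
          simp only [Finset.mem_filter, Finset.mem_univ, true_and, hcpj2, m1, m2]
          by_cases hs : s ∈ S <;> simp [hs] <;> tauto
        rw [f1, f2, f3, f4]
        simp only [Finset.card_empty, Nat.cast_zero, sub_zero, zero_sub,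
          Finset.card_filter]
        push_cast
        rw [← sub_eq_add_neg, ← Finset.sum_sub_distrib, ← Finset.sum_sub_distrib]
        apply Finset.sum_congr rfl
        intro s _
        by_cases h1 : a < s <;> by_cases h2 : s ∈ S <;>
          by_cases h3 : L s (colPred i) = true <;> by_cases h4 : L s i = true <;>
          simp [h1, h2, h3, h4]
      have hco : c * LaurentPolynomial.T (Nval j1 (insertCol p false L) (flipM j1 S (insertCol p false L)))
            * LaurentPolynomial.T (Nval j2 (flipM j1 S (insertCol p false L)) (flipM j2 S (flipM j1 S (insertCol p false L))))
          = c * LaurentPolynomial.T (Nval i L (flipM i S L)) := by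
        rw [mul_assoc, ← LaurentPolynomial.T_add, hexp]
      rw [hco]
      have hmat : flipM j2 S (flipM j1 S (insertCol p false L)) = insertCol p false (flipM i S L) := by
        funext s cc
        rcases col_cases p hp cc with hc | ⟨j, rfl⟩
        · have hcc : cc = j1 := Fin.ext (by rw [hc, hj1])
          rw [hcc, insertCol_at_p p false _ s j1 hj1]
          by_cases h : s ∈ S <;> simp [flipM, hcpj2, h, hval1, hvalcp]
        · rw [insertCol_emb]
          by_cases hji : j = i
          · subst hji
            have : emb p j = j2 := hj2e.symm
            rw [this]
            have houter : flipM j2 S (flipM j1 S (insertCol p false L)) s j2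
                = if s ∈ S then !(flipM j1 S (insertCol p false L) s j2) else flipM j1 S (insertCol p false L) s j2 := by
              rw [flipM_apply_i]
            rw [houter, m2, flipM_apply_i]
          · by_cases hjc : j = colPred i
            · subst hjc
              have hemb : emb p (colPred i) = colPred j1 := hcpj1.symm
              rw [hemb]
              have houter : flipM j2 S (flipM j1 S (insertCol p false L)) s (colPred j1)
                  = flipM j1 S (insertCol p false L) s (colPred j1) := by
                have hne1 : colPred j1 ≠ colPred j2 := by
                  rw [hcpj2, hcpj1]; exact hne_emb_j1 (colPred i)
                have hne2 : colPred j1 ≠ j2 := by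
                  rw [hcpj1]; intro h; exact (hne_j2_cpj1 (by rw [hcpj1, h])).elim
                simp [flipM, hne1, hne2]
              rw [houter, mcp]
              by_cases h : s ∈ S <;> simp [flipM, h, hcpi_ne_i]
            · have hne1 : emb p j ≠ colPred j2 := by rw [hcpj2]; exact hne_emb_j1 j
              have hne2 : emb p j ≠ j2 := by
                rw [hj2e]; exact fun h => hji ((emb_injective p) h)
              have hne3 : emb p j ≠ colPred j1 := by
                rw [hcpj1]; exact fun h => hjc ((emb_injective p) h)
              have hne4 : emb p j ≠ j1 := hne_emb_j1 j
              have : flipM j2 S (flipM j1 S (insertCol p false L)) s (emb p j) = (insertCol p false L) s (emb p j) := by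
                simp [flipM, hne1, hne2, hne3, hne4]
              rw [this, insertCol_emb]
              simp [flipM, hji, hjc]
      rw [hmat]
    · -- the dying branch
      have hex : ∃ s ∈ S, ¬ (L s i = false) := by
        by_contra hno
        push_neg at hno
        exact hcond (fun s hs => by
          simp only [elig, Finset.mem_filter, Finset.mem_univ, true_and]
          exact ⟨hsE1 s hs, hno s hs⟩)
      have hlt : (S.filter (fun s => L s i = false)).card < k := by
        rw [← hScard]
        exact Finset.card_lt_card (Finset.filter_ssubset.mpr hex)
      rw [hE2, Finset.powersetCard_eq_empty.mpr hlt, Finset.sum_empty,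
        if_neg (fun hmem => hcond (Finset.mem_powersetCard.mp hmem).1)]
  rw [Finset.sum_congr rfl key, Finset.sum_ite_mem,
    Finset.inter_eq_right.mpr hsub]

/-! ### The two-step simulation at the inserted column, `b = true` -/

lemma step_single_eq_true (p : ℕ) (hp : p ≤ e) (i : Fin e) (hi0 : i.1 ≠ 0) (hip : i.1 = p)
    (j1 j2 : Fin (e + 1)) (hj1 : j1.1 = p) (hj2v : j2.1 = p + 1) (k : ℕ)
    (L : Fin r → Fin e → Bool) (c : LaurentPolynomial ℤ) :
    Gop j1 k (Gop j2 k (Finsupp.single (insertCol p true L) c))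
      = Finsupp.mapDomain (insertCol p true) (Gop i k (Finsupp.single L c)) := by
  have hpe : p < e := hip ▸ i.isLt
  have hp1 : 1 ≤ p := by omega
  -- column identities
  have hcpi : (colPred i).1 = p - 1 := by simp [colPred, hip]
  have hcpj1 : colPred j1 = emb p (colPred i) := by
    apply Fin.ext
    show j1.1 - 1 = (if (colPred i).1 < p then (colPred i).1 else (colPred i).1 + 1)
    rw [if_pos (by omega), hcpi, hj1]
  have hcpj2 : colPred j2 = j1 := by
    apply Fin.ext
    show j2.1 - 1 = j1.1
    omega
  have hj2e : j2 = emb p i := by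
    apply Fin.ext
    show j2.1 = (if i.1 < p then i.1 else i.1 + 1)
    rw [if_neg (by omega)]
    omega
  have hcpi_ne_i : colPred i ≠ i := by
    intro h
    have := congrArg Fin.val h
    simp [colPred] at this
    omega
  have hne_emb_j1 : ∀ j : Fin e, emb p j ≠ j1 := by
    intro j h
    exact emb_val_ne_p p j (by rw [h, hj1])
  have hne_j2_cpj1 : j2 ≠ colPred j1 := by
    intro h
    have := congrArg Fin.val h
    rw [hj2v] at this
    simp [colPred, hj1] at this
    omega
  have hne_j2_j1 : j2 ≠ j1 := by
    intro h
    have := congrArg Fin.val h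
    omega
  have hne_cpj1_j1 : colPred j1 ≠ j1 := by
    intro h
    have := congrArg Fin.val h
    simp [colPred, hj1] at this
    omega
  -- values of the inserted matrices
  have hval1 : ∀ (K : Fin r → Fin e → Bool) (s : Fin r),
      insertCol p true K s j1 = true := fun K s => insertCol_at_p p true K s j1 hj1
  have hvalcp : ∀ (K : Fin r → Fin e → Bool) (s : Fin r),
      insertCol p true K s (colPred j1) = K s (colPred i) := fun K s => by
    rw [hcpj1, insertCol_emb]
  have hval2 : ∀ (K : Fin r → Fin e → Bool) (s : Fin r),
      insertCol p true K s j2 = K s i := fun K s => by rw [hj2e, insertCol_emb]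
  -- expand the first operator and the right-hand side
  rw [Gop_single, show Gop j1 k = ⇑(gopHom (e := e + 1) (r := r) j1 k) from rfl, map_sum,
    Gop_single, Finsupp.mapDomain_finset_sum]
  have hsub : (elig i L).powersetCard k ⊆ (elig j2 (insertCol p true L)).powersetCard k := by
    apply Finset.powersetCard_mono
    intro s hs
    simp only [elig, Finset.mem_filter, Finset.mem_univ, true_and] at hs ⊢
    rw [hcpj2, hval1, hval2]
    exact ⟨rfl, hs.2⟩
  have key : ∀ S ∈ (elig j2 (insertCol p true L)).powersetCard k,
      gopHom (e := e + 1) (r := r) j1 k (Finsupp.single (flipM j2 S (insertCol p true L))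
          (c * LaurentPolynomial.T (Nval j2 (insertCol p true L)
            (flipM j2 S (insertCol p true L)))))
        = if S ∈ (elig i L).powersetCard k then
            Finsupp.mapDomain (insertCol p true) (Finsupp.single (flipM i S L)
              (c * LaurentPolynomial.T (Nval i L (flipM i S L)))) else 0 := by
    intro S hS
    obtain ⟨hSsub, hScard⟩ := Finset.mem_powersetCard.mp hS
    have hsE1 : ∀ s ∈ S, L s i = false := by
      intro s hs
      have := hSsub hs
      simp only [elig, Finset.mem_filter, Finset.mem_univ, true_and] at this
      rw [hval2] at this
      exact this.2
    -- values of the intermediate matrix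
    have m1 : ∀ s, flipM j2 S (insertCol p true L) s j1 = if s ∈ S then false else true := by
      intro s
      have h : flipM j2 S (insertCol p true L) s j1
          = if s ∈ S then !(insertCol p true L s j1) else insertCol p true L s j1 := by
        simp [flipM, hcpj2]
      rw [h]
      by_cases hs : s ∈ S <;> simp [hs, hval1]
    have m2 : ∀ s, flipM j2 S (insertCol p true L) s j2
        = if s ∈ S then !(L s i) else L s i := by
      intro s
      rw [flipM_apply_i]
      by_cases hs : s ∈ S <;> simp [hs, hval2]
    have mcp : ∀ s, flipM j2 S (insertCol p true L) s (colPred j1) = L s (colPred i) := by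
      intro s
      have hne : colPred j1 ≠ j2 := fun h => hne_j2_cpj1 h.symm
      have h : flipM j2 S (insertCol p true L) s (colPred j1)
          = insertCol p true L s (colPred j1) := by
        simp [flipM, hcpj2, hne_cpj1_j1, hne]
      rw [h, hvalcp]
    show Gop j1 k _ = _
    rw [Gop_single]
    have hE2 : elig j1 (flipM j2 S (insertCol p true L))
        = S.filter (fun s => L s (colPred i) = true) := by
      ext s
      simp only [elig, Finset.mem_filter, Finset.mem_univ, true_and, m1, mcp]
      by_cases h : s ∈ S <;> simp [h]
    by_cases hcond : S ⊆ elig i L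
    · -- the surviving branch
      have hfilterS : S.filter (fun s => L s (colPred i) = true) = S := by
        apply Finset.filter_true_of_mem
        intro s hs
        have := hcond hs
        simp only [elig, Finset.mem_filter, Finset.mem_univ, true_and] at this
        exact this.1
      rw [hE2, hfilterS,
        show S.powersetCard k = {S} from by rw [← hScard, Finset.powersetCard_self],
        Finset.sum_singleton,
        if_pos (Finset.mem_powersetCard.mpr ⟨hcond, hScard⟩), Finsupp.mapDomain_single]
      have hS2 : S ⊆ elig j1 (flipM j2 S (insertCol p true L)) := by
        rw [hE2, hfilterS]
      have hexp : Nval j2 (insertCol p true L) (flipM j2 S (insertCol p true L))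
          + Nval j1 (flipM j2 S (insertCol p true L))
              (flipM j1 S (flipM j2 S (insertCol p true L)))
          = Nval i L (flipM i S L) := by
        rw [Nval_flip_formula j2 _ S hSsub, Nval_flip_formula j1 _ S hS2,
          Nval_flip_formula i L S hcond, ← Finset.sum_add_distrib]
        apply Finset.sum_congr rfl
        intro a _
        have f1 : Finset.univ.filter (fun s : Fin r =>
              a < s ∧ s ∉ S ∧ insertCol p true L s (colPred j2) = true
                ∧ insertCol p true L s j2 = false)
            = Finset.univ.filter (fun s : Fin r =>
              (a < s ∧ s ∉ S) ∧ L s i = false) := by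
          ext s
          simp only [Finset.mem_filter, Finset.mem_univ, true_and, hcpj2, hval1, hval2]
          tauto
        have f2 : Finset.univ.filter (fun s : Fin r =>
              a < s ∧ s ∉ S ∧ insertCol p true L s (colPred j2) = false
                ∧ insertCol p true L s j2 = true)
            = (∅ : Finset (Fin r)) := by
          ext s
          simp [hcpj2, hval1]
        have f3 : Finset.univ.filter (fun s : Fin r =>
              a < s ∧ s ∉ S ∧ flipM j2 S (insertCol p true L) s (colPred j1) = true
                ∧ flipM j2 S (insertCol p true L) s j1 = false)
            = (∅ : Finset (Fin r)) := by
          ext s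
          simp only [Finset.mem_filter, Finset.mem_univ, true_and, m1, mcp,
            Finset.notMem_empty, iff_false]
          rintro ⟨-, hs, -, h1⟩
          simp [hs] at h1
        have f4 : Finset.univ.filter (fun s : Fin r =>
              a < s ∧ s ∉ S ∧ flipM j2 S (insertCol p true L) s (colPred j1) = false
                ∧ flipM j2 S (insertCol p true L) s j1 = true)
            = Finset.univ.filter (fun s : Fin r =>
              (a < s ∧ s ∉ S) ∧ L s (colPred i) = false) := by
          ext s
          simp only [Finset.mem_filter, Finset.mem_univ, true_and, m1, mcp]
          by_cases hs : s ∈ S <;> simp [hs] <;> tauto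
        rw [f1, f2, f3, f4]
        simp only [Finset.card_empty, Nat.cast_zero, sub_zero, zero_sub,
          Finset.card_filter]
        push_cast
        rw [← sub_eq_add_neg, ← Finset.sum_sub_distrib, ← Finset.sum_sub_distrib]
        apply Finset.sum_congr rfl
        intro s _
        by_cases h1 : a < s <;> by_cases h2 : s ∈ S <;>
          by_cases h3 : L s (colPred i) = true <;> by_cases h4 : L s i = true <;>
          simp [h1, h2, h3, h4]
      have hco : c * LaurentPolynomial.T
              (Nval j2 (insertCol p true L) (flipM j2 S (insertCol p true L)))
            * LaurentPolynomial.T (Nval j1 (flipM j2 S (insertCol p true L))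
              (flipM j1 S (flipM j2 S (insertCol p true L))))
          = c * LaurentPolynomial.T (Nval i L (flipM i S L)) := by
        rw [mul_assoc, ← LaurentPolynomial.T_add, hexp]
      rw [hco]
      have hmat : flipM j1 S (flipM j2 S (insertCol p true L))
          = insertCol p true (flipM i S L) := by
        funext s cc
        rcases col_cases p hp cc with hc | ⟨j, rfl⟩
        · have hcc : cc = j1 := Fin.ext (by rw [hc, hj1])
          rw [hcc, insertCol_at_p p true _ s j1 hj1]
          have h : flipM j1 S (flipM j2 S (insertCol p true L)) s j1
              = if s ∈ S then !(flipM j2 S (insertCol p true L) s j1)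
                else flipM j2 S (insertCol p true L) s j1 := flipM_apply_i _ _ _ _
          rw [h, m1]
          by_cases hs : s ∈ S <;> simp [hs]
        · rw [insertCol_emb]
          by_cases hji : j = i
          · subst hji
            have hemb : emb p j = j2 := hj2e.symm
            rw [hemb]
            have houter : flipM j1 S (flipM j2 S (insertCol p true L)) s j2
                = flipM j2 S (insertCol p true L) s j2 := by
              simp [flipM, hne_j2_cpj1, hne_j2_j1]
            rw [houter, m2, flipM_apply_i]
          · by_cases hjc : j = colPred i
            · subst hjc
              have hemb : emb p (colPred i) = colPred j1 := hcpj1.symm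
              rw [hemb]
              have houter : flipM j1 S (flipM j2 S (insertCol p true L)) s (colPred j1)
                  = if s ∈ S then !(flipM j2 S (insertCol p true L) s (colPred j1))
                    else flipM j2 S (insertCol p true L) s (colPred j1) := by
                simp [flipM]
              rw [houter]
              simp only [mcp]
              by_cases hs : s ∈ S <;> simp [flipM, hs, hcpi_ne_i]
            · have hne1 : emb p j ≠ colPred j2 := by rw [hcpj2]; exact hne_emb_j1 j
              have hne2 : emb p j ≠ j2 := by
                rw [hj2e]; exact fun h => hji ((emb_injective p) h)
              have hne3 : emb p j ≠ colPred j1 := by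
                rw [hcpj1]; exact fun h => hjc ((emb_injective p) h)
              have hne4 : emb p j ≠ j1 := hne_emb_j1 j
              have h : flipM j1 S (flipM j2 S (insertCol p true L)) s (emb p j)
                  = insertCol p true L s (emb p j) := by
                simp [flipM, hne1, hne2, hne3, hne4]
              rw [h, insertCol_emb]
              simp [flipM, hji, hjc]
      rw [hmat]
    · -- the dying branch
      have hex : ∃ s ∈ S, ¬ (L s (colPred i) = true) := by
        by_contra hno
        push_neg at hno
        exact hcond (fun s hs => by
          simp only [elig, Finset.mem_filter, Finset.mem_univ, true_and]
          exact ⟨hno s hs, hsE1 s hs⟩)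
      have hlt : (S.filter (fun s => L s (colPred i) = true)).card < k := by
        rw [← hScard]
        exact Finset.card_lt_card (Finset.filter_ssubset.mpr hex)
      rw [hE2, Finset.powersetCard_eq_empty.mpr hlt, Finset.sum_empty,
        if_neg (fun hmem => hcond (Finset.mem_powersetCard.mp hmem).1)]
  rw [Finset.sum_congr rfl key, Finset.sum_ite_mem,
    Finset.inter_eq_right.mpr hsub]

/-! ### Lifting a whole list of operators -/

/-- Lift an operator at column `i` of `M(r,e)` to operators on `M(r,e+1)`. -/
def liftOp (p : ℕ) (b : Bool) (q : Fin e × ℕ) : List (Fin (e + 1) × ℕ) :=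
  if q.1.1 < p then [(⟨q.1.1, by have := q.1.isLt; omega⟩, q.2)]
  else if q.1.1 = p then
    (if b then [(⟨q.1.1 + 1, by have := q.1.isLt; omega⟩, q.2),
                (⟨q.1.1, by have := q.1.isLt; omega⟩, q.2)]
     else [(⟨q.1.1, by have := q.1.isLt; omega⟩, q.2),
           (⟨q.1.1 + 1, by have := q.1.isLt; omega⟩, q.2)])
  else [(⟨q.1.1 + 1, by have := q.1.isLt; omega⟩, q.2)]

lemma liftOp_valid (p : ℕ) (b : Bool) (q : Fin e × ℕ) (hq : q.1.1 ≠ 0 ∧ 0 < q.2) :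
    ∀ q' ∈ liftOp p b q, q'.1.1 ≠ 0 ∧ 0 < q'.2 := by
  intro q' hq'
  unfold liftOp at hq'
  split at hq'
  · simp at hq'
    rw [hq']
    exact ⟨hq.1, hq.2⟩
  · split at hq'
    · split at hq' <;> simp at hq' <;> rcases hq' with h | h <;> rw [h] <;>
        exact ⟨by simp [hq.1], hq.2⟩ <;> done
    · simp at hq'
      rw [hq']
      exact ⟨by simp, hq.2⟩

lemma GopList_one (x : Fin e × ℕ) (f : FM r e) :
    GopList [x] f = Gop x.1 x.2 f := rfl

lemma GopList_pair (x y : Fin e × ℕ) (f : FM r e) :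
    GopList [x, y] f = Gop y.1 y.2 (Gop x.1 x.2 f) := rfl

lemma GopList_zero (l : List (Fin e × ℕ)) : GopList l (0 : FM r e) = 0 := by
  induction l with
  | nil => rfl
  | cons q t ih =>
    show GopList t (Gop q.1 q.2 0) = 0
    rw [Gop_zero]
    exact ih

lemma GopList_add (l : List (Fin e × ℕ)) (f g : FM r e) :
    GopList l (f + g) = GopList l f + GopList l g := by
  induction l generalizing f g with
  | nil => rfl
  | cons q t ih =>
    show GopList t (Gop q.1 q.2 (f + g)) = GopList t (Gop q.1 q.2 f) + GopList t (Gop q.1 q.2 g)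
    rw [Gop_add]
    exact ih _ _

lemma step_lift (p : ℕ) (hp : p ≤ e) (b : Bool) (q : Fin e × ℕ) (hq : q.1.1 ≠ 0)
    (f : FM r e) :
    GopList (liftOp p b q) (Finsupp.mapDomain (insertCol p b) f)
      = Finsupp.mapDomain (insertCol p b) (Gop q.1 q.2 f) := by
  induction f using Finsupp.induction_linear with
  | zero =>
    rw [Finsupp.mapDomain_zero, GopList_zero, Gop_zero, Finsupp.mapDomain_zero]
  | add f g hf hg =>
    rw [Finsupp.mapDomain_add, GopList_add, hf, hg, Gop_add, Finsupp.mapDomain_add]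
  | single L c =>
    rw [Finsupp.mapDomain_single]
    unfold liftOp
    split
    · next h =>
      rw [GopList_one]
      apply step_single_ne p hp b q.1 _ _ _ q.2 L c
      · apply Fin.ext
        show q.1.1 = (if q.1.1 < p then q.1.1 else q.1.1 + 1)
        rw [if_pos h]
      · apply Fin.ext
        show q.1.1 - 1 = (if (colPred q.1).1 < p then (colPred q.1).1 else (colPred q.1).1 + 1)
        have hv : (colPred q.1).1 = q.1.1 - 1 := rfl
        rw [hv, if_pos (by omega)]
    · next h =>
      split
      · next h2 =>
        split
        · next hb =>
          subst hb
          rw [GopList_pair]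
          exact step_single_eq_true p hp q.1 hq h2 _ _ h2 (by simp [h2]) q.2 L c
        · next hb =>
          have hb' : b = false := by revert hb; cases b <;> simp
          subst hb'
          rw [GopList_pair]
          exact step_single_eq_false p hp q.1 hq h2 _ _ h2 (by simp [h2]) q.2 L c
      · next h2 =>
        rw [GopList_one]
        apply step_single_ne p hp b q.1 _ _ _ q.2 L c
        · apply Fin.ext
          show q.1.1 + 1 = (if q.1.1 < p then q.1.1 else q.1.1 + 1)
          rw [if_neg h]
        · apply Fin.ext
          show q.1.1 + 1 - 1 = (if (colPred q.1).1 < p then (colPred q.1).1 else (colPred q.1).1 + 1)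
          have hv : (colPred q.1).1 = q.1.1 - 1 := rfl
          rw [hv, if_neg (by omega)]
          omega

lemma GopList_append (l1 l2 : List (Fin e × ℕ)) (f : FM r e) :
    GopList (l1 ++ l2) f = GopList l2 (GopList l1 f) :=
  List.foldl_append

lemma lift_all (p : ℕ) (hp : p ≤ e) (b : Bool) (ops : List (Fin e × ℕ))
    (hops : ∀ q ∈ ops, q.1.1 ≠ 0) (f : FM r e) :
    GopList ((ops.map (liftOp p b)).flatten) (Finsupp.mapDomain (insertCol p b) f)
      = Finsupp.mapDomain (insertCol p b) (GopList ops f) := by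
  induction ops generalizing f with
  | nil => rfl
  | cons q t ih =>
    have : ((q :: t).map (liftOp p b)).flatten
        = liftOp p b q ++ (t.map (liftOp p b)).flatten := by simp
    rw [this, GopList_append, step_lift p hp b q (hops q (by simp)) f]
    exact ih (fun q' hq' => hops q' (by simp [hq'])) (Gop q.1 q.2 f)

end Aux

/-- Constant columns can be ignored when inducing. -/
theorem ignore_constant_columns (e r : ℕ) (he : 2 ≤ e) (hr : 1 ≤ r)
    (L : Fin r → Fin e → Bool)
    (ops : List (Fin e × ℕ)) (hops : ∀ q ∈ ops, q.1.1 ≠ 0 ∧ 0 < q.2)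
    (hNN : ∀ M : Fin r → Fin e → Bool,
      IsNNLaurent (GopList ops (Finsupp.single L 1) M))
    (p : ℕ) (hp : p ≤ e) (b : Bool) :
    ∃ ops' : List (Fin (e + 1) × ℕ), (∀ q ∈ ops', q.1.1 ≠ 0 ∧ 0 < q.2) ∧
      (∀ M : Fin r → Fin e → Bool,
        GopList ops' (Finsupp.single (insertCol p b L) 1) (insertCol p b M)
          = GopList ops (Finsupp.single L 1) M) ∧
      (∀ M' : Fin r → Fin (e + 1) → Bool,
        (∀ M : Fin r → Fin e → Bool, M' ≠ insertCol p b M) →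
          GopList ops' (Finsupp.single (insertCol p b L) 1) M' = 0) := by
  refine ⟨(ops.map (liftOp p b)).flatten, ?_, ?_, ?_⟩
  · intro q' hq'
    rw [List.mem_flatten] at hq'
    obtain ⟨l, hl, hq'l⟩ := hq'
    rw [List.mem_map] at hl
    obtain ⟨q, hq, rfl⟩ := hl
    exact liftOp_valid p b q (hops q hq) q' hq'l
  · intro M
    rw [show (Finsupp.single (insertCol p b L) 1 : FM r (e + 1))
        = Finsupp.mapDomain (insertCol p b) (Finsupp.single L 1) from
          (Finsupp.mapDomain_single).symm,
      lift_all p hp b ops (fun q hq => (hops q hq).1) (Finsupp.single L 1),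
      Finsupp.mapDomain_apply (insertCol_injective p b)]
  · intro M' hM'
    rw [show (Finsupp.single (insertCol p b L) 1 : FM r (e + 1))
        = Finsupp.mapDomain (insertCol p b) (Finsupp.single L 1) from
          (Finsupp.mapDomain_single).symm,
      lift_all p hp b ops (fun q hq => (hops q hq).1) (Finsupp.single L 1)]
    apply Finsupp.mapDomain_notin_range
    rintro ⟨M, hM⟩
    exact hM' M hM.symm


end
end AK
end
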